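/- arXiv:1310.8390 — 6 statements merged into one kernel-verified Lean document; each statement's English description precedes it below -/
import Mathlib

section
/- (Edge Harnack step) Let Q : X → ℝ and let u : X → ℝ with u ≥ 0 satisfy −Δu + Q u = 0 on X. Then for every edge (x,y) ∈ E one has u(y) ≤ (1 + √(d̂_x · P(x))) · u(x), where P(x) = d̂_x (1 + Q(x))² − 2 Q(x) − 1 (note P(x) ≥ Q(x)² ≥ 0 since d̂_x ≥ 1). -/
open Finset Filter

noncomputable section

variable {V : Type*}

/-- The (weighted) degree `d_x = ∑_{(x,y) ∈ E} μ_{xy}` of a vertex `x` in a locally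
finite graph `G` with edge weights `μ`. -/
def deg (G : SimpleGraph V) [G.LocallyFinite] (μ : V → V → ℝ) (x : V) : ℝ :=
  ∑ y ∈ G.neighborFinset x, μ x y

/-- The graph Laplacian `(Δu)(x) = ∑_{(x,y) ∈ E} (μ_{xy}/d_x) (u(y) - u(x))`. -/
def lap (G : SimpleGraph V) [G.LocallyFinite] (μ : V → V → ℝ) (u : V → ℝ) (x : V) : ℝ :=
  ∑ y ∈ G.neighborFinset x, μ x y / deg G μ x * (u y - u x)

/-- The squared gradient `|∇u|²(x) = ∑_{(x,y) ∈ E} (μ_{xy}/d_x) (u(y) - u(x))²`. -/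
def gradSq (G : SimpleGraph V) [G.LocallyFinite] (μ : V → V → ℝ) (u : V → ℝ) (x : V) : ℝ :=
  ∑ y ∈ G.neighborFinset x, μ x y / deg G μ x * (u y - u x) ^ 2

/-- `d̂_x = sup_{(x,y) ∈ E} d_x / μ_{xy}`. -/
def dhat (G : SimpleGraph V) [G.LocallyFinite] (μ : V → V → ℝ) (x : V) : ℝ :=
  sSup {r : ℝ | ∃ y, G.Adj x y ∧ r = deg G μ x / μ x y}

/-- The principal (Dirichlet) eigenvalue `λ₁(D, -Δ+Q)` of a finite subset `D ⊆ X`: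
the infimum of the Rayleigh quotients `(∫_D (-Δu + Qu)·u) / (∫_D u²)` over test
functions `u` not identically zero on `D` and vanishing outside `D`, where
`∫_S f = ∑_{x ∈ S} f(x) d_x`. -/
def lambda1 (G : SimpleGraph V) [G.LocallyFinite] (μ : V → V → ℝ) (Q : V → ℝ)
    (D : Finset V) : ℝ :=
  sInf {r : ℝ | ∃ u : V → ℝ, (∃ x ∈ D, u x ≠ 0) ∧ (∀ x, x ∉ D → u x = 0) ∧
    r = (∑ x ∈ D, (-lap G μ u x + Q x * u x) * u x * deg G μ x) /
        (∑ x ∈ D, (u x) ^ 2 * deg G μ x)}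

/-- `λ₁(X, -Δ+Q)`: the limit of `λ₁(D_j, -Δ+Q)` along any exhaustion of `X` by finite
subsets; by monotonicity this equals the infimum of `λ₁(D, -Δ+Q)` over all nonempty
finite subsets `D` of `X`. -/
def lambda1Top (G : SimpleGraph V) [G.LocallyFinite] (μ : V → V → ℝ) (Q : V → ℝ) : ℝ :=
  sInf {r : ℝ | ∃ D : Finset V, D.Nonempty ∧ r = lambda1 G μ Q D}

/-- `H` is the Dirichlet Green function of the ball `B(j) = {x | d(x,x₀) < j}`:
it is nonnegative, and for every `y ∈ B(j)` one has `Δ_x H(x,y) = -δ_y(x)` for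
`x ∈ B(j)` and `H(x,y) = 0` for `x ∉ B(j)`. -/
def IsDirichletGreenOnBall (G : SimpleGraph V) [G.LocallyFinite] [DecidableEq V]
    (μ : V → V → ℝ) (x₀ : V) (j : ℕ) (H : V → V → ℝ) : Prop :=
  (∀ x y, 0 ≤ H x y) ∧
  ∀ y, G.dist y x₀ < j →
    (∀ x, G.dist x x₀ < j → lap G μ (fun z => H z y) x = -(if x = y then 1 else 0)) ∧
    (∀ x, ¬ G.dist x x₀ < j → H x y = 0)

/-- Edge Harnack step: if `u ≥ 0` solves `-Δu + Qu = 0` on `X`,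
then for every edge `(x,y) ∈ E` one has `u(y) ≤ (1 + √(d̂_x · P(x))) u(x)`,
where `P(x) = d̂_x (1 + Q(x))² - 2 Q(x) - 1`. -/
theorem edge_harnack_step {V : Type*} [Countable V] (G : SimpleGraph V) [G.LocallyFinite]
    (μ : V → V → ℝ) (hsymm : ∀ x y, μ x y = μ y x)
    (hpos : ∀ x y, G.Adj x y → 0 < μ x y) (hconn : G.Connected)
    (Q : V → ℝ) (u : V → ℝ) (hu : ∀ y, 0 ≤ u y)
    (heq : ∀ y, -lap G μ u y + Q y * u y = 0)
    (x y : V) (hxy : G.Adj x y) :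
    u y ≤ (1 + Real.sqrt (dhat G μ x *
      (dhat G μ x * (1 + Q x) ^ 2 - 2 * Q x - 1))) * u x := by
  classical
  set s := G.neighborFinset x with hs
  set d := deg G μ x with hdd
  set D := dhat G μ x with hD
  set P := D * (1 + Q x) ^ 2 - 2 * Q x - 1 with hP
  have hmem : y ∈ s := by rw [hs, SimpleGraph.mem_neighborFinset]; exact hxy
  have hadjmem : ∀ z ∈ s, G.Adj x z := by
    intro z hz
    rw [hs, SimpleGraph.mem_neighborFinset] at hz
    exact hz
  have hd : 0 < d :=
    Finset.sum_pos (fun z hz => hpos x z (hadjmem z hz)) ⟨y, hmem⟩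
  -- the set defining dhat is a finite set
  have hSeq : {r : ℝ | ∃ z, G.Adj x z ∧ r = d / μ x z} =
      ↑(s.image fun z => d / μ x z) := by
    ext r
    simp only [Finset.coe_image, Set.mem_image, Finset.mem_coe, Set.mem_setOf_eq, hs,
      SimpleGraph.mem_neighborFinset]
    constructor
    · rintro ⟨z, hz, rfl⟩; exact ⟨z, hz, rfl⟩
    · rintro ⟨z, hz, rfl⟩; exact ⟨z, hz, rfl⟩
  have hbdd : BddAbove {r : ℝ | ∃ z, G.Adj x z ∧ r = d / μ x z} := by
    rw [hSeq]; exact (s.image fun z => d / μ x z).finite_toSet.bddAbove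
  have hle : ∀ z, G.Adj x z → d / μ x z ≤ D := fun z hz => le_csSup hbdd ⟨z, hz, rfl⟩
  have hμy : 0 < μ x y := hpos x y hxy
  have hμyd : μ x y ≤ d := by
    refine Finset.single_le_sum (f := fun z => μ x z) ?_ hmem
    exact fun z hz => (hpos x z (hadjmem z hz)).le
  have hD1 : 1 ≤ D := le_trans ((one_le_div hμy).mpr hμyd) (hle y hxy)
  have hPnn : 0 ≤ P := by nlinarith [sq_nonneg (Q x), sq_nonneg (1 + Q x)]
  have hsum1 : ∑ z ∈ s, μ x z / d = 1 := by
    have hds : ∑ z ∈ s, μ x z = d := rfl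
    rw [← Finset.sum_div, hds]
    exact div_self hd.ne'
  -- the equation at x
  have hlap : lap G μ u x = Q x * u x := by have := heq x; linarith
  set T := ∑ z ∈ s, μ x z / d * u z with hT
  have hTeq : T = (1 + Q x) * u x := by
    have hexp : lap G μ u x = T - (∑ z ∈ s, μ x z / d) * u x := by
      rw [hT, Finset.sum_mul, ← Finset.sum_sub_distrib]
      apply Finset.sum_congr rfl
      intro z _
      ring
    rw [hsum1, hlap] at hexp
    linarith
  have hTnn : 0 ≤ (1 + Q x) * u x := by
    rw [← hTeq, hT]
    exact Finset.sum_nonneg fun z hz =>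
      mul_nonneg (div_nonneg (hpos x z (hadjmem z hz)).le hd.le) (hu z)
  have hterm_nn : ∀ z ∈ s, 0 ≤ μ x z / d * u z := fun z hz =>
    mul_nonneg (div_nonneg (hpos x z (hadjmem z hz)).le hd.le) (hu z)
  -- pointwise bound on neighbors
  have huz : ∀ z ∈ s, u z ≤ D * ((1 + Q x) * u x) := by
    intro z hz
    have hμz := hpos x z (hadjmem z hz)
    have h1 : μ x z / d * u z ≤ (1 + Q x) * u x := by
      rw [← hTeq]
      exact Finset.single_le_sum hterm_nn hz
    have h2 : u z ≤ d / μ x z * ((1 + Q x) * u x) := by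
      rw [div_mul_eq_mul_div, le_div_iff₀ hμz]
      calc u z * μ x z = μ x z / d * u z * d := by field_simp
      _ ≤ (1 + Q x) * u x * d := mul_le_mul_of_nonneg_right h1 hd.le
      _ = d * ((1 + Q x) * u x) := by ring
    exact h2.trans (mul_le_mul_of_nonneg_right (hle z (hadjmem z hz)) hTnn)
  -- second moment bound
  have hS2 : ∑ z ∈ s, μ x z / d * u z ^ 2 ≤ D * (1 + Q x) ^ 2 * u x ^ 2 := by
    calc ∑ z ∈ s, μ x z / d * u z ^ 2
        ≤ ∑ z ∈ s, μ x z / d * u z * (D * ((1 + Q x) * u x)) := by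
          refine Finset.sum_le_sum fun z hz => ?_
          have : μ x z / d * u z ^ 2 = (μ x z / d * u z) * u z := by ring
          rw [this]
          exact mul_le_mul_of_nonneg_left (huz z hz) (hterm_nn z hz)
      _ = T * (D * ((1 + Q x) * u x)) := by rw [hT, Finset.sum_mul]
      _ = D * (1 + Q x) ^ 2 * u x ^ 2 := by rw [hTeq]; ring
  -- gradient bound
  have hgrad : gradSq G μ u x ≤ P * u x ^ 2 := by
    have hexp : gradSq G μ u x = ∑ z ∈ s, (μ x z / d * u z ^ 2
        - 2 * u x * (μ x z / d * u z) + μ x z / d * u x ^ 2) := by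
      unfold gradSq
      apply Finset.sum_congr rfl
      intro z _
      ring
    rw [Finset.sum_add_distrib, Finset.sum_sub_distrib, ← Finset.mul_sum,
      ← Finset.sum_mul, ← hT, hsum1, hTeq] at hexp
    rw [hexp, hP]
    nlinarith [hS2]
  -- bound on the edge (x,y)
  have hterm : μ x y / d * (u y - u x) ^ 2 ≤ gradSq G μ u x := by
    refine Finset.single_le_sum (f := fun z => μ x z / d * (u z - u x) ^ 2) ?_ hmem
    exact fun z hz => mul_nonneg (div_nonneg (hpos x z (hadjmem z hz)).le hd.le) (sq_nonneg _)
  have h3 : (u y - u x) ^ 2 ≤ d / μ x y * (P * u x ^ 2) := by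
    rw [div_mul_eq_mul_div, le_div_iff₀ hμy]
    calc (u y - u x) ^ 2 * μ x y = μ x y / d * (u y - u x) ^ 2 * d := by field_simp
    _ ≤ P * u x ^ 2 * d := mul_le_mul_of_nonneg_right (hterm.trans hgrad) hd.le
    _ = d * (P * u x ^ 2) := by ring
  have h4 : (u y - u x) ^ 2 ≤ D * P * u x ^ 2 := by
    have := h3.trans (mul_le_mul_of_nonneg_right (hle y hxy)
      (mul_nonneg hPnn (sq_nonneg (u x))))
    linarith [this]
  have h5 : u y - u x ≤ Real.sqrt (D * P) * u x := by
    have h6 := Real.sqrt_le_sqrt (show (u y - u x) ^ 2 ≤ D * P * u x ^ 2 from h4)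
    rw [Real.sqrt_sq_eq_abs] at h6
    have h7 : Real.sqrt (D * P * u x ^ 2) = Real.sqrt (D * P) * u x := by
      rw [Real.sqrt_mul (mul_nonneg (le_trans zero_le_one hD1) hPnn), Real.sqrt_sq (hu x)]
    rw [h7] at h6
    exact (le_abs_self _).trans h6
  have := h5
  nlinarith [this]
end
end

section
/- (Harnack inequality) Let Q : X → ℝ. For every finite subset S ⊂ X there exists a constant C = C(S) > 0, depending only on the weighted graph, Q, and S (and not on u), such that every function u : X → ℝ with u ≥ 0 satisfying −Δu + Q u = 0 on X obeys sup_{x ∈ S} u(x) ≤ C · inf_{x ∈ S} u(x). -/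
open Finset Filter

noncomputable section

variable {V : Type*}

lemma harnack_step {V : Type*} (G : SimpleGraph V) [G.LocallyFinite]
    (μ : V → V → ℝ) (hpos : ∀ x y, G.Adj x y → 0 < μ x y) (Q : V → ℝ)
    {x y : V} (hxy : G.Adj x y) :
    ∃ C : ℝ, 0 < C ∧ ∀ u : V → ℝ, (∀ z, 0 ≤ u z) →
      (∀ z, -lap G μ u z + Q z * u z = 0) → u y ≤ C * u x := by
  have hd : 0 < deg G μ x := by
    apply Finset.sum_pos
    · intro z hz
      exact hpos x z ((SimpleGraph.mem_neighborFinset _ _ _).mp hz)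
    · exact ⟨y, (SimpleGraph.mem_neighborFinset _ _ _).mpr hxy⟩
  have hμ : 0 < μ x y := hpos x y hxy
  refine ⟨max (deg G μ x / μ x y * (1 + Q x)) 1, lt_of_lt_of_le one_pos (le_max_right _ _),
    fun u hu heq => ?_⟩
  have hsum1 : ∑ z ∈ G.neighborFinset x, μ x z / deg G μ x = 1 := by
    rw [← Finset.sum_div, ← deg, div_self hd.ne']
  have hlap : lap G μ u x = (∑ z ∈ G.neighborFinset x, μ x z / deg G μ x * u z) - u x := by
    unfold lap
    simp only [mul_sub]
    rw [Finset.sum_sub_distrib, ← Finset.sum_mul, hsum1, one_mul]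
  have key : ∑ z ∈ G.neighborFinset x, μ x z / deg G μ x * u z = (1 + Q x) * u x := by
    have h := heq x
    have : lap G μ u x = Q x * u x := by linarith
    rw [hlap] at this
    linarith
  have hterm : μ x y / deg G μ x * u y ≤ (1 + Q x) * u x := by
    rw [← key]
    apply Finset.single_le_sum (f := fun z => μ x z / deg G μ x * u z)
    · intro z hz
      exact mul_nonneg (div_nonneg (hpos x z ((SimpleGraph.mem_neighborFinset _ _ _).mp hz)).le hd.le) (hu z)
    · exact (SimpleGraph.mem_neighborFinset _ _ _).mpr hxy
  have h1 : u y = deg G μ x / μ x y * (μ x y / deg G μ x * u y) := by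
    field_simp
  calc u y = deg G μ x / μ x y * (μ x y / deg G μ x * u y) := h1
    _ ≤ deg G μ x / μ x y * ((1 + Q x) * u x) := by
        apply mul_le_mul_of_nonneg_left hterm (div_nonneg hd.le hμ.le)
    _ = deg G μ x / μ x y * (1 + Q x) * u x := by ring
    _ ≤ max (deg G μ x / μ x y * (1 + Q x)) 1 * u x :=
        mul_le_mul_of_nonneg_right (le_max_left _ _) (hu x)

lemma harnack_walk {V : Type*} (G : SimpleGraph V) [G.LocallyFinite]
    (μ : V → V → ℝ) (hpos : ∀ x y, G.Adj x y → 0 < μ x y) (Q : V → ℝ)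
    {x y : V} (p : G.Walk x y) :
    ∃ C : ℝ, 0 < C ∧ ∀ u : V → ℝ, (∀ z, 0 ≤ u z) →
      (∀ z, -lap G μ u z + Q z * u z = 0) → u y ≤ C * u x := by
  induction p with
  | nil => exact ⟨1, one_pos, fun u hu heq => by simp⟩
  | cons h p ih =>
    obtain ⟨C, hC, hCle⟩ := ih
    obtain ⟨C', hC', hC'le⟩ := harnack_step G μ hpos Q h
    refine ⟨C * C', mul_pos hC hC', fun u hu heq => ?_⟩
    calc u _ ≤ C * u _ := hCle u hu heq
      _ ≤ C * (C' * u _) := mul_le_mul_of_nonneg_left (hC'le u hu heq) hC.le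
      _ = C * C' * u _ := by ring

/-- Harnack inequality: for every finite subset `S ⊆ X` there is a
constant `C = C(S) > 0`, independent of `u`, such that every nonnegative solution
`u` of `-Δu + Qu = 0` on `X` satisfies `sup_S u ≤ C · inf_S u`. -/
theorem harnack_inequality {V : Type*} [Countable V] (G : SimpleGraph V) [G.LocallyFinite]
    (μ : V → V → ℝ) (hsymm : ∀ x y, μ x y = μ y x)
    (hpos : ∀ x y, G.Adj x y → 0 < μ x y) (hconn : G.Connected)
    (Q : V → ℝ) (S : Finset V) :
    ∃ C : ℝ, 0 < C ∧ ∀ u : V → ℝ, (∀ y, 0 ≤ u y) →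
      (∀ y, -lap G μ u y + Q y * u y = 0) →
      ∀ x ∈ S, ∀ y ∈ S, u x ≤ C * u y := by
  have pair : ∀ x y : V, ∃ C : ℝ, 0 < C ∧ ∀ u : V → ℝ, (∀ z, 0 ≤ u z) →
      (∀ z, -lap G μ u z + Q z * u z = 0) → u x ≤ C * u y := by
    intro x y
    obtain ⟨p⟩ := hconn.preconnected y x
    exact harnack_walk G μ hpos Q p
  choose f hf using pair
  refine ⟨1 + ∑ p ∈ S ×ˢ S, f p.1 p.2, ?_, ?_⟩
  · have : 0 ≤ ∑ p ∈ S ×ˢ S, f p.1 p.2 :=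
      Finset.sum_nonneg fun p _ => (hf p.1 p.2).1.le
    linarith
  · intro u hu heq x hx y hy
    have hle : f x y ≤ 1 + ∑ p ∈ S ×ˢ S, f p.1 p.2 := by
      have h1 : f x y ≤ ∑ p ∈ S ×ˢ S, f p.1 p.2 := by
        have := Finset.single_le_sum (f := fun p : V × V => f p.1 p.2)
          (fun p _ => (hf p.1 p.2).1.le) (Finset.mk_mem_product hx hy)
        simpa using this
      linarith
    calc u x ≤ f x y * u y := (hf x y).2 u hu heq
      _ ≤ (1 + ∑ p ∈ S ×ˢ S, f p.1 p.2) * u y :=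
        mul_le_mul_of_nonneg_right hle (hu y)
end
end

section
/- (Compactness of normalized positive solutions) Let Q_j : X → ℝ (j ∈ ℕ) be locally uniformly bounded (for every finite S ⊂ X, sup_j sup_{x ∈ S} |Q_j(x)| < ∞) and suppose Q_j → Q_∞ pointwise on X. Let u_j : X → ℝ satisfy u_j > 0 and −Δu_j + Q_j u_j = 0 on X. Fix x₀ ∈ X and set û_j(x) = u_j(x)/u_j(x₀). Then there is a subsequence of (û_j) converging pointwise on X to a function û_∞ with û_∞ > 0 on X, û_∞(x₀) = 1, and −Δû_∞ + Q_∞ û_∞ = 0 on X. -/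
open Finset Filter

noncomputable section

variable {V : Type*}

lemma ratio_bound (G : SimpleGraph V) [G.LocallyFinite]
    (μ : V → V → ℝ) (hpos : ∀ x y, G.Adj x y → 0 < μ x y)
    (Q : ℕ → V → ℝ)
    (hbd : ∀ S : Finset V, ∃ M : ℝ, ∀ j : ℕ, ∀ x ∈ S, |Q j x| ≤ M)
    (u : ℕ → V → ℝ) (hupos : ∀ j x, 0 < u j x)
    (heq : ∀ j x, -lap G μ (u j) x + Q j x * u j x = 0)
    {x y : V} (hxy : G.Adj x y) :
    ∃ K, 0 < K ∧ ∀ j, u j y ≤ K * u j x := by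
  obtain ⟨M, hM⟩ := hbd {x}
  have hM0 : 0 ≤ M := le_trans (abs_nonneg _) (hM 0 x (Finset.mem_singleton_self x))
  have hdpos : 0 < deg G μ x :=
    Finset.sum_pos (fun z hz => hpos x z ((G.mem_neighborFinset x z).mp hz))
      ⟨y, (G.mem_neighborFinset x y).mpr hxy⟩
  have hd' : deg G μ x ≠ 0 := hdpos.ne'
  have hsum : ∀ j, ∑ z ∈ G.neighborFinset x, μ x z * u j z
      = deg G μ x * (1 + Q j x) * u j x := by
    intro j
    have h := heq j x
    have hlap : lap G μ (u j) x = Q j x * u j x := by linarith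
    have hmul : ∑ z ∈ G.neighborFinset x, μ x z * (u j z - u j x)
        = deg G μ x * (Q j x * u j x) := by
      rw [← hlap]
      unfold lap
      rw [Finset.mul_sum]
      refine Finset.sum_congr rfl fun z _ => ?_
      field_simp
    have hexp : ∑ z ∈ G.neighborFinset x, μ x z * (u j z - u j x)
        = (∑ z ∈ G.neighborFinset x, μ x z * u j z) - deg G μ x * u j x := by
      unfold deg
      rw [Finset.sum_mul]
      rw [← Finset.sum_sub_distrib]
      exact Finset.sum_congr rfl fun z _ => by ring
    have hr : deg G μ x * (1 + Q j x) * u j x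
        = deg G μ x * u j x + deg G μ x * (Q j x * u j x) := by ring
    linarith
  refine ⟨deg G μ x * (1 + M) / μ x y,
    div_pos (mul_pos hdpos (by linarith)) (hpos x y hxy), fun j => ?_⟩
  have hy : μ x y * u j y ≤ ∑ z ∈ G.neighborFinset x, μ x z * u j z :=
    Finset.single_le_sum
      (fun z hz => (mul_pos (hpos x z ((G.mem_neighborFinset x z).mp hz))
        (hupos j z)).le)
      ((G.mem_neighborFinset x y).mpr hxy)
  have hq : Q j x ≤ M := (abs_le.mp (hM j x (Finset.mem_singleton_self x))).2
  have hup : deg G μ x * (1 + Q j x) * u j x ≤ deg G μ x * (1 + M) * u j x := by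
    nlinarith [mul_nonneg (sub_nonneg.mpr hq) (mul_pos hdpos (hupos j x)).le]
  rw [div_mul_eq_mul_div, le_div_iff₀ (hpos x y hxy)]
  nlinarith [hsum j]

lemma walk_bound (G : SimpleGraph V) [G.LocallyFinite]
    (μ : V → V → ℝ) (hpos : ∀ x y, G.Adj x y → 0 < μ x y)
    (Q : ℕ → V → ℝ)
    (hbd : ∀ S : Finset V, ∃ M : ℝ, ∀ j : ℕ, ∀ x ∈ S, |Q j x| ≤ M)
    (u : ℕ → V → ℝ) (hupos : ∀ j x, 0 < u j x)
    (heq : ∀ j x, -lap G μ (u j) x + Q j x * u j x = 0)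
    {a b : V} (w : G.Walk a b) :
    ∃ K, 0 < K ∧ ∀ j, u j b ≤ K * u j a ∧ u j a ≤ K * u j b := by
  induction w with
  | nil => exact ⟨1, one_pos, fun j => ⟨by simp, by simp⟩⟩
  | @cons a c b h p ih =>
    obtain ⟨K, hK, hKb⟩ := ih
    obtain ⟨K1, hK1, h1⟩ := ratio_bound G μ hpos Q hbd u hupos heq h
    obtain ⟨K2, hK2, h2⟩ := ratio_bound G μ hpos Q hbd u hupos heq h.symm
    refine ⟨max (K * K1) (K2 * K), lt_max_of_lt_left (mul_pos hK hK1), fun j => ⟨?_, ?_⟩⟩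
    · calc u j b ≤ K * u j c := (hKb j).1
        _ ≤ K * (K1 * u j a) := by nlinarith [h1 j, (hupos j c).le]
        _ = K * K1 * u j a := by ring
        _ ≤ max (K * K1) (K2 * K) * u j a :=
          mul_le_mul_of_nonneg_right (le_max_left _ _) (hupos j a).le
    · calc u j a ≤ K2 * u j c := h2 j
        _ ≤ K2 * (K * u j b) := by nlinarith [(hKb j).2, (hupos j c).le]
        _ = K2 * K * u j b := by ring
        _ ≤ max (K * K1) (K2 * K) * u j b :=
          mul_le_mul_of_nonneg_right (le_max_right _ _) (hupos j b).le

lemma lap_div (G : SimpleGraph V) [G.LocallyFinite] (μ : V → V → ℝ)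
    (v : V → ℝ) (c : ℝ) (x : V) :
    lap G μ (fun z => v z / c) x = lap G μ v x / c := by
  unfold lap
  rw [Finset.sum_div]
  exact Finset.sum_congr rfl fun z _ => by ring

theorem compactness {V : Type*} [Countable V] (G : SimpleGraph V) [G.LocallyFinite]
    (μ : V → V → ℝ) (hsymm : ∀ x y, μ x y = μ y x)
    (hpos : ∀ x y, G.Adj x y → 0 < μ x y) (hconn : G.Connected)
    (Q : ℕ → V → ℝ) (Qinf : V → ℝ)
    (hbd : ∀ S : Finset V, ∃ M : ℝ, ∀ j : ℕ, ∀ x ∈ S, |Q j x| ≤ M)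
    (hconv : ∀ x, Tendsto (fun j => Q j x) atTop (nhds (Qinf x)))
    (u : ℕ → V → ℝ) (hupos : ∀ j x, 0 < u j x)
    (heq : ∀ j x, -lap G μ (u j) x + Q j x * u j x = 0)
    (x₀ : V) :
    ∃ φ : ℕ → ℕ, StrictMono φ ∧ ∃ uinf : V → ℝ,
      (∀ x, Tendsto (fun k => u (φ k) x / u (φ k) x₀) atTop (nhds (uinf x))) ∧
      (∀ x, 0 < uinf x) ∧ uinf x₀ = 1 ∧
      ∀ x, -lap G μ uinf x + Qinf x * uinf x = 0 := by
  have hKex : ∀ x : V, ∃ K, 0 < K ∧ ∀ j, u j x ≤ K * u j x₀ ∧ u j x₀ ≤ K * u j x := by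
    intro x
    obtain ⟨w⟩ := hconn.preconnected x₀ x
    exact walk_bound G μ hpos Q hbd u hupos heq w
  choose K hKpos hKb using hKex
  -- normalized sequence lies in a compact product of intervals
  set v : ℕ → V → ℝ := fun j x => u j x / u j x₀ with hv
  have hmem : ∀ j, v j ∈ Set.univ.pi fun x => Set.Icc (K x)⁻¹ (K x) := by
    intro j
    rw [Set.mem_univ_pi]
    intro x
    constructor
    · rw [le_div_iff₀ (hupos j x₀), inv_mul_le_iff₀ (hKpos x)]
      exact (hKb x j).2
    · rw [div_le_iff₀ (hupos j x₀)]
      exact (hKb x j).1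
  have hs : IsCompact (Set.univ.pi fun x => Set.Icc (K x)⁻¹ (K x)) :=
    isCompact_univ_pi fun x => isCompact_Icc
  obtain ⟨uinf, huinf_mem, φ, hφ, htend⟩ := hs.tendsto_subseq hmem
  have hpt : ∀ x, Tendsto (fun k => u (φ k) x / u (φ k) x₀) atTop (nhds (uinf x)) := by
    intro x
    exact tendsto_pi_nhds.mp htend x
  refine ⟨φ, hφ, uinf, hpt, ?_, ?_, ?_⟩
  · intro x
    have := (huinf_mem x (Set.mem_univ x)).1
    exact lt_of_lt_of_le (inv_pos.mpr (hKpos x)) this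
  · have h1 : Tendsto (fun k => u (φ k) x₀ / u (φ k) x₀) atTop (nhds 1) := by
      have : ∀ k : ℕ, u (φ k) x₀ / u (φ k) x₀ = 1 := fun k => div_self (hupos _ _).ne'
      simp only [this]
      exact tendsto_const_nhds
    exact tendsto_nhds_unique (hpt x₀) h1
  · intro x
    have hQ : Tendsto (fun k => Q (φ k) x) atTop (nhds (Qinf x)) :=
      (hconv x).comp hφ.tendsto_atTop
    have hlap : Tendsto (fun k => lap G μ (fun z => u (φ k) z / u (φ k) x₀) x) atTop
        (nhds (lap G μ uinf x)) := by
      unfold lap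
      apply tendsto_finset_sum
      intro y _
      exact ((hpt y).sub (hpt x)).const_mul _
    have hlim : Tendsto (fun k => -lap G μ (fun z => u (φ k) z / u (φ k) x₀) x
        + Q (φ k) x * (u (φ k) x / u (φ k) x₀)) atTop
        (nhds (-lap G μ uinf x + Qinf x * uinf x)) :=
      hlap.neg.add (hQ.mul (hpt x))
    have hzero : ∀ k : ℕ, -lap G μ (fun z => u (φ k) z / u (φ k) x₀) x
        + Q (φ k) x * (u (φ k) x / u (φ k) x₀) = 0 := by
      intro k
      rw [lap_div]
      have h := heq (φ k) x
      have hr : -(lap G μ (u (φ k)) x / u (φ k) x₀)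
          + Q (φ k) x * (u (φ k) x / u (φ k) x₀)
          = (-lap G μ (u (φ k)) x + Q (φ k) x * u (φ k) x) / u (φ k) x₀ := by ring
      rw [hr, h, zero_div]
    rw [show (fun k => -lap G μ (fun z => u (φ k) z / u (φ k) x₀) x
        + Q (φ k) x * (u (φ k) x / u (φ k) x₀)) = fun _ => (0:ℝ) from funext hzero] at hlim
    exact tendsto_nhds_unique hlim tendsto_const_nhds
end
end

section
/- (Existence of a principal eigenfunction) Let Q : X → ℝ and assume λ := λ₁(X, −Δ+Q) > 0. Then there exists a function u : X → ℝ with u(x) > 0 for all x ∈ X such that (−Δ + Q)u = λ u on all of X. -/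
open Finset Filter

noncomputable section

variable {V : Type*}

section aux
variable [DecidableEq V] (G : SimpleGraph V) [G.LocallyFinite] (μ : V → V → ℝ)

def Tset (D : Finset V) : Finset V := D ∪ D.biUnion (fun x => G.neighborFinset x)
lemma subset_Tset (D : Finset V) : D ⊆ Tset G D := Finset.subset_union_left
lemma nbr_mem_Tset {D : Finset V} {x y : V} (hx : x ∈ D) (hy : y ∈ G.neighborFinset x) :
    y ∈ Tset G D :=
  Finset.mem_union.2 (Or.inr (Finset.mem_biUnion.2 ⟨x, hx, hy⟩))

/-- bilinear forms over `D` -/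
def Arr (Q : V → ℝ) (D : Finset V) (u v : V → ℝ) : ℝ :=
  ∑ x ∈ D, (-lap G μ u x + Q x * u x) * v x * deg G μ x

def nrm (D : Finset V) (u v : V → ℝ) : ℝ := ∑ x ∈ D, u x * v x * deg G μ x

def En (D : Finset V) (u v : V → ℝ) : ℝ :=
  ∑ x ∈ Tset G D, ∑ y ∈ G.neighborFinset x ∩ Tset G D, μ x y * (u x - u y) * (v x - v y)

-- per-vertex identity
lemma neg_lap_mul (u v : V → ℝ) (x : V) (hd : deg G μ x ≠ 0) :
    (-lap G μ u x) * v x * deg G μ x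
      = ∑ y ∈ G.neighborFinset x, μ x y * (u x - u y) * v x := by
  unfold lap
  rw [← Finset.sum_neg_distrib, Finset.sum_mul, Finset.sum_mul]
  apply Finset.sum_congr rfl
  intro y _
  field_simp
  ring

lemma lap_linear (u v : V → ℝ) (t : ℝ) (x : V) :
    lap G μ (fun z => u z + t * v z) x = lap G μ u x + t * lap G μ v x := by
  unfold lap
  rw [Finset.mul_sum, ← Finset.sum_add_distrib]
  exact Finset.sum_congr rfl (fun y _ => by ring)

lemma lap_smul (u : V → ℝ) (c : ℝ) (x : V) :
    lap G μ (fun z => c * u z) x = c * lap G μ u x := by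
  unfold lap
  rw [Finset.mul_sum]
  exact Finset.sum_congr rfl (fun y _ => by ring)

lemma lap_rowsum (x : V) (hd : deg G μ x ≠ 0) :
    ∑ y ∈ G.neighborFinset x, μ x y / deg G μ x = 1 := by
  rw [← Finset.sum_div]
  exact div_self hd

lemma eq_form (Q : V → ℝ) (u : V → ℝ) (lam : ℝ) (y : V) (hd : deg G μ y ≠ 0)
    (heq : -lap G μ u y + Q y * u y = lam * u y) :
    ∑ z ∈ G.neighborFinset y, μ y z / deg G μ y * u z = (1 + Q y - lam) * u y := by
  have h1 : lap G μ u y = (∑ z ∈ G.neighborFinset y, μ y z / deg G μ y * u z) - u y := by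
    unfold lap
    rw [eq_sub_iff_add_eq]
    have : (∑ z ∈ G.neighborFinset y, μ y z / deg G μ y * (u z - u y))
        + (∑ z ∈ G.neighborFinset y, μ y z / deg G μ y) * u y
        = ∑ z ∈ G.neighborFinset y, μ y z / deg G μ y * u z := by
      rw [Finset.sum_mul, ← Finset.sum_add_distrib]
      exact Finset.sum_congr rfl (fun z _ => by ring)
    rw [lap_rowsum G μ y hd] at this
    linarith [this]
  rw [h1] at heq
  linarith [heq]

lemma quad_zero (b c : ℝ) (H : ∀ t : ℝ, 0 ≤ 2 * b * t + c * t ^ 2) : b = 0 := by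
  by_contra hb
  have hb2 : 0 < b ^ 2 := by positivity
  set k : ℝ := (|c| + 1)⁻¹ with hk
  have hkpos : 0 < k := by positivity
  have hck : k * (|c| + 1) = 1 := by
    rw [hk]; field_simp
  have hc : c ≤ |c| := le_abs_self c
  have h := H (-b * k)
  nlinarith [mul_pos hb2 hkpos, mul_pos (mul_pos hb2 hkpos) hkpos]

set_option linter.unusedSectionVars false

lemma sum_swap_adj (T : Finset V) (F : V → V → ℝ) :
    ∑ x ∈ T, ∑ y ∈ G.neighborFinset x ∩ T, F x y
      = ∑ x ∈ T, ∑ y ∈ G.neighborFinset x ∩ T, F y x := by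
  have key : ∀ F : V → V → ℝ,
      ∑ x ∈ T, ∑ y ∈ G.neighborFinset x ∩ T, F x y
        = ∑ p ∈ (T ×ˢ T).filter (fun p => p.2 ∈ G.neighborFinset p.1), F p.1 p.2 := by
    intro F
    rw [Finset.sum_filter, Finset.sum_product]
    apply Finset.sum_congr rfl
    intro x _
    rw [← Finset.sum_filter]
    congr 1
    ext a
    simp [Finset.mem_filter, Finset.mem_inter, and_comm]
  rw [key, key]
  apply Finset.sum_nbij' (fun p => Prod.swap p) (fun p => Prod.swap p)
  · intro a ha
    rcases Finset.mem_filter.1 ha with ⟨hm, hadj⟩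
    rcases Finset.mem_product.1 hm with ⟨h1, h2⟩
    refine Finset.mem_filter.2 ⟨Finset.mem_product.2 ⟨h2, h1⟩, ?_⟩
    exact (G.mem_neighborFinset _ _).2 ((G.mem_neighborFinset _ _).1 hadj).symm
  · intro a ha
    rcases Finset.mem_filter.1 ha with ⟨hm, hadj⟩
    rcases Finset.mem_product.1 hm with ⟨h1, h2⟩
    refine Finset.mem_filter.2 ⟨Finset.mem_product.2 ⟨h2, h1⟩, ?_⟩
    exact (G.mem_neighborFinset _ _).2 ((G.mem_neighborFinset _ _).1 hadj).symm
  · intro a _; rfl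
  · intro a _; rfl
  · intro a _; rfl

lemma sum_neg_lap_eq (hsymm : ∀ x y, μ x y = μ y x) (D : Finset V) (u v : V → ℝ)
    (hd : ∀ x, deg G μ x ≠ 0) (hv : ∀ x, x ∉ D → v x = 0) :
    ∑ x ∈ D, (-lap G μ u x) * v x * deg G μ x = En G μ D u v / 2 := by
  have step1 : ∑ x ∈ D, (-lap G μ u x) * v x * deg G μ x
      = ∑ x ∈ Tset G D, (-lap G μ u x) * v x * deg G μ x := by
    apply Finset.sum_subset (subset_Tset G D)
    intro x _ hx
    rw [hv x hx]; ring
  have step2 : ∑ x ∈ Tset G D, (-lap G μ u x) * v x * deg G μ x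
      = ∑ x ∈ Tset G D, ∑ y ∈ G.neighborFinset x ∩ Tset G D, μ x y * (u x - u y) * v x := by
    apply Finset.sum_congr rfl
    intro x _
    rw [neg_lap_mul G μ u v x (hd x)]
    symm
    apply Finset.sum_subset Finset.inter_subset_left
    intro y hy hy'
    by_cases hxD : x ∈ D
    · exact absurd (Finset.mem_inter.2 ⟨hy, nbr_mem_Tset G hxD hy⟩) hy'
    · rw [hv x hxD]; ring
  have swap := sum_swap_adj G (Tset G D) (fun x y => μ x y * (u x - u y) * v x)
  have two : (∑ x ∈ Tset G D, ∑ y ∈ G.neighborFinset x ∩ Tset G D, μ x y * (u x - u y) * v x)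
      + (∑ x ∈ Tset G D, ∑ y ∈ G.neighborFinset x ∩ Tset G D, μ y x * (u y - u x) * v y)
      = En G μ D u v := by
    unfold En
    rw [← Finset.sum_add_distrib]
    apply Finset.sum_congr rfl
    intro x _
    rw [← Finset.sum_add_distrib]
    apply Finset.sum_congr rfl
    intro y _
    rw [hsymm y x]
    ring
  rw [step1, step2]
  rw [swap] at two
  linarith [two]

lemma Arr_eq_energy (hsymm : ∀ x y, μ x y = μ y x) (Q : V → ℝ) (D : Finset V) (u v : V → ℝ)
    (hd : ∀ x, deg G μ x ≠ 0) (hv : ∀ x, x ∉ D → v x = 0) :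
    Arr G μ Q D u v = En G μ D u v / 2 + ∑ x ∈ D, Q x * u x * v x * deg G μ x := by
  unfold Arr
  rw [← sum_neg_lap_eq G μ hsymm D u v hd hv, ← Finset.sum_add_distrib]
  exact Finset.sum_congr rfl (fun x _ => by ring)

lemma Arr_symm (hsymm : ∀ x y, μ x y = μ y x) (Q : V → ℝ) (D : Finset V) (u v : V → ℝ)
    (hd : ∀ x, deg G μ x ≠ 0) (hu : ∀ x, x ∉ D → u x = 0) (hv : ∀ x, x ∉ D → v x = 0) :
    Arr G μ Q D u v = Arr G μ Q D v u := by
  rw [Arr_eq_energy G μ hsymm Q D u v hd hv, Arr_eq_energy G μ hsymm Q D v u hd hu]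
  congr 1
  · unfold En
    congr 1
    apply Finset.sum_congr rfl
    intro x _
    exact Finset.sum_congr rfl (fun y _ => by ring)
  · exact Finset.sum_congr rfl (fun x _ => by ring)

lemma En_nonneg (hpos : ∀ x y, G.Adj x y → 0 < μ x y) (D : Finset V) (u : V → ℝ) :
    0 ≤ En G μ D u u := by
  apply Finset.sum_nonneg
  intro x _
  apply Finset.sum_nonneg
  intro y hy
  have hadj : G.Adj x y := (G.mem_neighborFinset _ _).1 (Finset.mem_inter.1 hy).1
  have := (hpos x y hadj).le
  nlinarith [mul_self_nonneg (u x - u y)]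

lemma En_abs_le (hpos : ∀ x y, G.Adj x y → 0 < μ x y) (D : Finset V) (u : V → ℝ) :
    En G μ D (fun x => |u x|) (fun x => |u x|) ≤ En G μ D u u := by
  apply Finset.sum_le_sum
  intro x _
  apply Finset.sum_le_sum
  intro y hy
  have hadj : G.Adj x y := (G.mem_neighborFinset _ _).1 (Finset.mem_inter.1 hy).1
  have hμ := (hpos x y hadj).le
  have h1 : (|u x| - |u y|) * (|u x| - |u y|) ≤ (u x - u y) * (u x - u y) := by
    nlinarith [abs_mul_abs_self (u x), abs_mul_abs_self (u y), le_abs_self (u x * u y),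
      abs_mul (u x) (u y)]
  nlinarith [h1]

lemma Arr_add_left (Q : V → ℝ) (D : Finset V) (u w v : V → ℝ) (t : ℝ) :
    Arr G μ Q D (fun z => u z + t * w z) v = Arr G μ Q D u v + t * Arr G μ Q D w v := by
  unfold Arr
  rw [Finset.mul_sum, ← Finset.sum_add_distrib]
  apply Finset.sum_congr rfl
  intro x _
  rw [lap_linear]
  ring

lemma Arr_add_right (Q : V → ℝ) (D : Finset V) (u w v : V → ℝ) (t : ℝ) :
    Arr G μ Q D v (fun z => u z + t * w z) = Arr G μ Q D v u + t * Arr G μ Q D v w := by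
  unfold Arr
  rw [Finset.mul_sum, ← Finset.sum_add_distrib]
  exact Finset.sum_congr rfl (fun x _ => by ring)

lemma Arr_smul (Q : V → ℝ) (D : Finset V) (u : V → ℝ) (c : ℝ) :
    Arr G μ Q D (fun z => c * u z) (fun z => c * u z) = c ^ 2 * Arr G μ Q D u u := by
  unfold Arr
  rw [Finset.mul_sum]
  apply Finset.sum_congr rfl
  intro x _
  rw [lap_smul]
  ring

lemma perron (hsymm : ∀ x y, μ x y = μ y x) (hpos : ∀ x y, G.Adj x y → 0 < μ x y)
    (hd : ∀ x, 0 < deg G μ x) (Q : V → ℝ) (D : Finset V) (hne : D.Nonempty) :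
    ∃ w : V → ℝ, (∀ x, 0 ≤ w x) ∧ (∃ p ∈ D, w p ≠ 0) ∧ (∀ x, x ∉ D → w x = 0) ∧
      (∀ z ∈ D, -lap G μ w z + Q z * w z = lambda1 G μ Q D * w z) ∧
      (∀ u : V → ℝ, (∃ x ∈ D, u x ≠ 0) → (∀ x, x ∉ D → u x = 0) →
        lambda1 G μ Q D ≤ (∑ x ∈ D, (-lap G μ u x + Q x * u x) * u x * deg G μ x) /
          (∑ x ∈ D, (u x) ^ 2 * deg G μ x)) := by
  classical
  have hd' : ∀ x, deg G μ x ≠ 0 := fun x => (hd x).ne'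
  set R : (V → ℝ) → ℝ := fun u => ∑ x ∈ D, (-lap G μ u x + Q x * u x) * u x * deg G μ x
    with hR
  have hRArr : ∀ u, R u = Arr G μ Q D u u := fun u => rfl
  set s : (V → ℝ) → ℝ := fun u => ∑ x ∈ D, (u x) ^ 2 * deg G μ x with hs
  set K : Set (V → ℝ) := {u | (∀ x, x ∉ D → u x = 0) ∧ s u = 1} with hK
  -- s positive on test functions
  have hspos : ∀ u : V → ℝ, (∃ x ∈ D, u x ≠ 0) → 0 < s u := by
    intro u ⟨p, hp, hup⟩
    have hdp := hd p
    have h1 : 0 < (u p) ^ 2 * deg G μ p := by positivity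
    have h2 : (u p) ^ 2 * deg G μ p ≤ s u := by
      apply Finset.single_le_sum (f := fun x => (u x) ^ 2 * deg G μ x) _ hp
      intro x _
      have := (hd x).le
      positivity
    linarith
  -- K is nonempty
  have hKne : K.Nonempty := by
    obtain ⟨p, hp⟩ := hne
    refine ⟨fun x => if x = p then (Real.sqrt (deg G μ p))⁻¹ else 0, ?_, ?_⟩
    · intro x hx
      exact if_neg (fun h => hx ((h : x = p) ▸ hp))
    · show (∑ x ∈ D, _ = (1:ℝ))
      rw [Finset.sum_eq_single p]
      · have hite : (fun x => if x = p then (Real.sqrt (deg G μ p))⁻¹ else 0) p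
            = (Real.sqrt (deg G μ p))⁻¹ := by simp
        rw [hite, ← Real.sqrt_inv, Real.sq_sqrt (le_of_lt (inv_pos.2 (hd p)))]
        exact inv_mul_cancel₀ (hd' p)
      · intro x _ hxp
        simp only [if_neg hxp]
        ring
      · intro h; exact absurd hp h
  -- K is compact
  have hA : IsClosed {u : V → ℝ | ∀ x, x ∉ D → u x = 0} := by
    have : {u : V → ℝ | ∀ x, x ∉ D → u x = 0}
        = ⋂ (x : V) (_ : x ∉ D), {u : V → ℝ | u x = 0} := by
      ext u; simp
    rw [this]
    exact isClosed_iInter fun x => isClosed_iInter fun _ =>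
      isClosed_eq (continuous_apply x) continuous_const
  have hscont : Continuous s := by
    apply continuous_finset_sum
    intro x _
    exact ((continuous_apply x).pow 2).mul continuous_const
  have hKcl : IsClosed K := hA.inter (isClosed_eq hscont continuous_const)
  have hKcpt : IsCompact K := by
    apply IsCompact.of_isClosed_subset
      (isCompact_univ_pi (fun x => isCompact_Icc
        (a := -((deg G μ x)⁻¹ + 1)) (b := (deg G μ x)⁻¹ + 1))) hKcl
    intro u hu
    rw [Set.mem_univ_pi]
    intro x
    have hB : (0:ℝ) < (deg G μ x)⁻¹ + 1 := by
      have := (inv_pos.2 (hd x)).le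
      linarith
    by_cases hx : x ∈ D
    · have h1 : (u x) ^ 2 * deg G μ x ≤ 1 := by
        rw [← hu.2]
        apply Finset.single_le_sum (f := fun x => (u x) ^ 2 * deg G μ x) _ hx
        intro y _
        have := (hd y).le
        positivity
      have h2 : (u x) ^ 2 ≤ (deg G μ x)⁻¹ := by
        rw [← one_div]
        rw [le_div_iff₀ (hd x)]
        exact h1
      have h3 : (u x) ^ 2 ≤ ((deg G μ x)⁻¹ + 1) ^ 2 := by
        have h4 : (0:ℝ) ≤ (deg G μ x)⁻¹ := (inv_pos.2 (hd x)).le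
        nlinarith
      constructor
      · nlinarith [sq_nonneg (u x + ((deg G μ x)⁻¹ + 1))]
      · nlinarith [sq_nonneg (u x - ((deg G μ x)⁻¹ + 1))]
    · rw [hu.1 x hx]
      constructor <;> linarith
  -- continuity of R
  have hRcont : Continuous R := by
    apply continuous_finset_sum
    intro x _
    apply Continuous.mul _ continuous_const
    apply Continuous.mul _ (continuous_apply x)
    apply Continuous.add _ (continuous_const.mul (continuous_apply x))
    apply Continuous.neg
    apply continuous_finset_sum
    intro y _
    exact continuous_const.mul ((continuous_apply y).sub (continuous_apply x))
  -- minimizer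
  obtain ⟨u₀, hu₀K, hmin⟩ := hKcpt.exists_isMinOn hKne hRcont.continuousOn
  have hmin' : ∀ u ∈ K, R u₀ ≤ R u := fun u hu => hmin hu
  -- normalization: every Rayleigh quotient is ≥ R u₀
  have hnorm : ∀ u : V → ℝ, (∃ x ∈ D, u x ≠ 0) → (∀ x, x ∉ D → u x = 0) →
      R u₀ ≤ R u / s u := by
    intro u hnz hsupp
    have hsu : 0 < s u := hspos u hnz
    set c : ℝ := (Real.sqrt (s u))⁻¹ with hc
    have hcpos : 0 < c := by
      rw [hc]
      exact inv_pos.2 (Real.sqrt_pos.2 hsu)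
    have hc2 : c ^ 2 = (s u)⁻¹ := by
      rw [hc, ← Real.sqrt_inv, Real.sq_sqrt (le_of_lt (inv_pos.2 hsu))]
    have hvK : (fun x => c * u x) ∈ K := by
      constructor
      · intro x hx
        show c * u x = 0
        rw [hsupp x hx, mul_zero]
      · show (∑ x ∈ D, (c * u x) ^ 2 * deg G μ x) = 1
        have : ∀ x ∈ D, (c * u x) ^ 2 * deg G μ x = c ^ 2 * ((u x) ^ 2 * deg G μ x) :=
          fun x _ => by ring
        rw [Finset.sum_congr rfl this, ← Finset.mul_sum, hc2]
        exact inv_mul_cancel₀ (ne_of_gt hsu)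
    have hRv : R (fun x => c * u x) = c ^ 2 * R u := by
      rw [hRArr, hRArr]
      exact Arr_smul G μ Q D u c
    have := hmin' _ hvK
    rw [hRv, hc2] at this
    rw [div_eq_inv_mul]
    exact this
  -- identification of lambda1
  have hu₀nz : ∃ x ∈ D, u₀ x ≠ 0 := by
    by_contra hcon
    push_neg at hcon
    have : s u₀ = 0 := by
      apply Finset.sum_eq_zero
      intro x hx
      rw [hcon x hx]
      ring
    rw [hu₀K.2] at this
    norm_num at this
  have hmem : R u₀ ∈ {r : ℝ | ∃ u : V → ℝ, (∃ x ∈ D, u x ≠ 0) ∧ (∀ x, x ∉ D → u x = 0) ∧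
      r = (∑ x ∈ D, (-lap G μ u x + Q x * u x) * u x * deg G μ x) /
        (∑ x ∈ D, (u x) ^ 2 * deg G μ x)} := by
    refine ⟨u₀, hu₀nz, hu₀K.1, ?_⟩
    show R u₀ = R u₀ / s u₀
    rw [hu₀K.2, div_one]
  have hlb : ∀ r ∈ {r : ℝ | ∃ u : V → ℝ, (∃ x ∈ D, u x ≠ 0) ∧ (∀ x, x ∉ D → u x = 0) ∧
      r = (∑ x ∈ D, (-lap G μ u x + Q x * u x) * u x * deg G μ x) /
        (∑ x ∈ D, (u x) ^ 2 * deg G μ x)}, R u₀ ≤ r := by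
    rintro r ⟨u, hnz, hsupp, rfl⟩
    exact hnorm u hnz hsupp
  have hlam : lambda1 G μ Q D = R u₀ := by
    unfold lambda1
    exact le_antisymm (csInf_le ⟨R u₀, hlb⟩ hmem) (le_csInf ⟨R u₀, hmem⟩ hlb)
  -- absolute value of the minimizer
  set w : V → ℝ := fun x => |u₀ x| with hw
  have hwx : ∀ x, w x = |u₀ x| := fun x => rfl
  have hwsupp : ∀ x, x ∉ D → w x = 0 := by
    intro x hx
    rw [hwx, hu₀K.1 x hx, abs_zero]
  have hwK : w ∈ K := by
    refine ⟨hwsupp, ?_⟩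
    show (∑ x ∈ D, (w x) ^ 2 * deg G μ x) = 1
    have : ∀ x ∈ D, (w x) ^ 2 * deg G μ x = (u₀ x) ^ 2 * deg G μ x := by
      intro x _
      rw [hwx, sq_abs]
    rw [Finset.sum_congr rfl this]
    exact hu₀K.2
  have hRweq : R w = R u₀ := by
    apply le_antisymm _ (hmin' w hwK)
    have e3 : R w = En G μ D w w / 2 + ∑ x ∈ D, Q x * w x * w x * deg G μ x := by
      rw [hRArr]
      exact Arr_eq_energy G μ hsymm Q D w w hd' hwsupp
    have e4 : R u₀ = En G μ D u₀ u₀ / 2 + ∑ x ∈ D, Q x * u₀ x * u₀ x * deg G μ x := by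
      rw [hRArr]
      exact Arr_eq_energy G μ hsymm Q D u₀ u₀ hd' hu₀K.1
    have e5 : En G μ D w w ≤ En G μ D u₀ u₀ := by
      rw [hw]
      exact En_abs_le G μ hpos D u₀
    have e6 : (∑ x ∈ D, Q x * w x * w x * deg G μ x)
        = ∑ x ∈ D, Q x * u₀ x * u₀ x * deg G μ x := by
      apply Finset.sum_congr rfl
      intro x _
      rw [hwx]
      calc Q x * |u₀ x| * |u₀ x| * deg G μ x
          = Q x * (|u₀ x| * |u₀ x|) * deg G μ x := by ring
        _ = Q x * (u₀ x * u₀ x) * deg G μ x := by rw [abs_mul_abs_self]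
        _ = Q x * u₀ x * u₀ x * deg G μ x := by ring
    linarith
  -- the general lower bound
  have hstar : ∀ u : V → ℝ, (∀ x, x ∉ D → u x = 0) → R u₀ * s u ≤ R u := by
    intro u hsupp
    by_cases hnz : ∃ x ∈ D, u x ≠ 0
    · have hsu := hspos u hnz
      have := hnorm u hnz hsupp
      rw [le_div_iff₀ hsu] at this
      exact this
    · push_neg at hnz
      have hs0 : s u = 0 := by
        apply Finset.sum_eq_zero
        intro x hx
        rw [hnz x hx]
        ring
      have hR0 : R u = 0 := by
        apply Finset.sum_eq_zero
        intro x hx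
        rw [hnz x hx]
        ring
      rw [hs0, hR0, mul_zero]
  -- Euler–Lagrange equation
  have hEL : ∀ z ∈ D, -lap G μ w z + Q z * w z = lambda1 G μ Q D * w z := by
    intro z hz
    set δ : V → ℝ := fun x => if x = z then (1:ℝ) else 0 with hδ
    have hδz : δ z = 1 := if_pos rfl
    have hδsupp : ∀ x, x ∉ D → δ x = 0 := by
      intro x hx
      exact if_neg (fun h => hx ((h : x = z) ▸ hz))
    set b : ℝ := Arr G μ Q D w δ - R u₀ * (∑ x ∈ D, w x * δ x * deg G μ x) with hb
    set c : ℝ := Arr G μ Q D δ δ - R u₀ * (∑ x ∈ D, (δ x) ^ 2 * deg G μ x) with hcdef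
    have hsymδ : Arr G μ Q D δ w = Arr G μ Q D w δ :=
      Arr_symm G μ hsymm Q D δ w hd' hδsupp hwsupp
    have hArrww : Arr G μ Q D w w = R u₀ := by rw [← hRArr]; exact hRweq
    have hquad : ∀ t : ℝ, 0 ≤ 2 * b * t + c * t ^ 2 := by
      intro t
      have hsupp' : ∀ x, x ∉ D → w x + t * δ x = 0 := by
        intro x hx
        rw [hwsupp x hx, hδsupp x hx]
        ring
      have h := hstar (fun x => w x + t * δ x) hsupp'
      have e1 : R (fun x => w x + t * δ x)
          = (Arr G μ Q D w w + t * Arr G μ Q D w δ)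
            + t * (Arr G μ Q D δ w + t * Arr G μ Q D δ δ) := by
        rw [hRArr, Arr_add_left, Arr_add_right, Arr_add_right]
      have e2 : s (fun x => w x + t * δ x)
          = (∑ x ∈ D, (w x) ^ 2 * deg G μ x)
            + 2 * t * (∑ x ∈ D, w x * δ x * deg G μ x)
            + t ^ 2 * (∑ x ∈ D, (δ x) ^ 2 * deg G μ x) := by
        show (∑ x ∈ D, (w x + t * δ x) ^ 2 * deg G μ x) = _
        have : ∀ x ∈ D, (w x + t * δ x) ^ 2 * deg G μ x
            = (w x) ^ 2 * deg G μ x + 2 * t * (w x * δ x * deg G μ x)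
              + t ^ 2 * ((δ x) ^ 2 * deg G μ x) := fun x _ => by ring
        rw [Finset.sum_congr rfl this, Finset.sum_add_distrib, Finset.sum_add_distrib,
          ← Finset.mul_sum, ← Finset.mul_sum]
      have hsw1 : (∑ x ∈ D, (w x) ^ 2 * deg G μ x) = 1 := hwK.2
      rw [e1, e2, hsw1, hsymδ, hArrww] at h
      rw [hb, hcdef]
      nlinarith [h]
    have hb0 : b = 0 := quad_zero b c hquad
    have hArrwδ : Arr G μ Q D w δ = (-lap G μ w z + Q z * w z) * deg G μ z := by
      unfold Arr
      rw [Finset.sum_eq_single z]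
      · rw [hδz, mul_one]
      · intro x _ hxz
        have : δ x = 0 := if_neg hxz
        rw [this, mul_zero, zero_mul]
      · intro h; exact absurd hz h
    have hsδ : (∑ x ∈ D, w x * δ x * deg G μ x) = w z * deg G μ z := by
      rw [Finset.sum_eq_single z]
      · rw [hδz, mul_one]
      · intro x _ hxz
        have : δ x = 0 := if_neg hxz
        rw [this, mul_zero, zero_mul]
      · intro h; exact absurd hz h
    rw [hb, hArrwδ, hsδ] at hb0
    rw [hlam]
    apply mul_right_cancel₀ (hd' z)
    linarith [hb0]
  -- nonvanishing
  have hwnz : ∃ p ∈ D, w p ≠ 0 := by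
    by_contra hcon
    push_neg at hcon
    have : s w = 0 := by
      apply Finset.sum_eq_zero
      intro x hx
      rw [hcon x hx]
      ring
    rw [hwK.2] at this
    norm_num at this
  refine ⟨w, fun x => by rw [hwx]; exact abs_nonneg _, hwnz, hwsupp, hEL, ?_⟩
  intro u hnz hsupp
  rw [hlam]
  exact hnorm u hnz hsupp

/-- exhaustion by combinatorial balls -/
def ballF (G : SimpleGraph V) [G.LocallyFinite] [DecidableEq V] (x₀ : V) : ℕ → Finset V
  | 0 => {x₀}
  | (j+1) => ballF G x₀ j ∪ (ballF G x₀ j).biUnion (fun x => G.neighborFinset x)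

lemma ballF_succ (x₀ : V) (j : ℕ) :
    ballF G x₀ (j+1) = ballF G x₀ j ∪ (ballF G x₀ j).biUnion (fun x => G.neighborFinset x) :=
  rfl

lemma ballF_subset_succ (x₀ : V) (j : ℕ) : ballF G x₀ j ⊆ ballF G x₀ (j+1) :=
  Finset.subset_union_left

lemma ballF_mono (x₀ : V) {i j : ℕ} (h : i ≤ j) : ballF G x₀ i ⊆ ballF G x₀ j := by
  induction j with
  | zero => rw [Nat.le_zero.1 h]
  | succ j ih =>
    rcases Nat.lt_or_ge i (j+1) with h' | h'
    · exact (ih (Nat.lt_succ_iff.1 h')).trans (ballF_subset_succ G x₀ j)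
    · rw [Nat.le_antisymm h h']

lemma x₀_mem_ballF (x₀ : V) (j : ℕ) : x₀ ∈ ballF G x₀ j :=
  ballF_mono G x₀ (Nat.zero_le j) (Finset.mem_singleton_self x₀)

lemma adj_mem_ballF (x₀ : V) {j : ℕ} {x y : V} (hx : x ∈ ballF G x₀ j) (h : G.Adj x y) :
    y ∈ ballF G x₀ (j+1) := by
  rw [ballF_succ]
  exact Finset.mem_union.2 (Or.inr (Finset.mem_biUnion.2
    ⟨x, hx, (G.mem_neighborFinset _ _).2 h⟩))

lemma walk_mem_ballF (x₀ : V) {a x : V} (p : G.Walk a x) :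
    ∀ j : ℕ, a ∈ ballF G x₀ j → x ∈ ballF G x₀ (j + p.length) := by
  induction p with
  | nil => intro j hj; simpa using hj
  | @cons a b x h q ih =>
    intro j hj
    have hb : b ∈ ballF G x₀ (j+1) := adj_mem_ballF G x₀ hj h
    have := ih (j+1) hb
    have hlen : j + (SimpleGraph.Walk.cons h q).length = j + 1 + q.length := by
      rw [SimpleGraph.Walk.length_cons]; omega
    rw [hlen]
    exact this

lemma harnack_step_s13 (hpos : ∀ x y, G.Adj x y → 0 < μ x y) (hd : ∀ x, 0 < deg G μ x)
    (Q : V → ℝ) (u : V → ℝ) (lam : ℝ) (hlam : 0 < lam) (hu : ∀ z, 0 ≤ u z)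
    {y x : V} (hadj : G.Adj y x)
    (heq : -lap G μ u y + Q y * u y = lam * u y) :
    u x ≤ (max 0 (1 + Q y) / (μ y x / deg G μ y)) * u y := by
  have hA : 0 < μ y x / deg G μ y := div_pos (hpos y x hadj) (hd y)
  have e := eq_form G μ Q u lam y (hd y).ne' heq
  have hxy : x ∈ G.neighborFinset y := (G.mem_neighborFinset _ _).2 hadj
  have h1 : μ y x / deg G μ y * u x ≤ ∑ z ∈ G.neighborFinset y, μ y z / deg G μ y * u z := by
    apply Finset.single_le_sum (f := fun z => μ y z / deg G μ y * u z) _ hxy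
    intro z hz
    have := (hpos y z ((G.mem_neighborFinset _ _).1 hz)).le
    have := (hd y).le
    have := hu z
    positivity
  have h2 : (1 + Q y - lam) * u y ≤ max 0 (1 + Q y) * u y := by
    apply mul_le_mul_of_nonneg_right _ (hu y)
    exact le_trans (by linarith) (le_max_right 0 (1 + Q y))
  rw [e] at h1
  rw [div_mul_eq_mul_div, le_div_iff₀ hA]
  calc u x * (μ y x / deg G μ y) = μ y x / deg G μ y * u x := by ring
    _ ≤ (1 + Q y - lam) * u y := h1
    _ ≤ max 0 (1 + Q y) * u y := h2

lemma chain_bound (hpos : ∀ x y, G.Adj x y → 0 < μ x y) (hd : ∀ x, 0 < deg G μ x)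
    (Q : V → ℝ) (x₀ : V) :
    ∀ j : ℕ, ∀ x ∈ ballF G x₀ j, ∃ C C' : ℝ, 0 ≤ C ∧ 0 ≤ C' ∧
      ∀ (u : V → ℝ) (lam : ℝ), 0 < lam → (∀ z, 0 ≤ u z) → u x₀ = 1 →
        (∀ y ∈ ballF G x₀ j, -lap G μ u y + Q y * u y = lam * u y) →
        1 ≤ C * u x ∧ u x ≤ C' := by
  intro j
  induction j with
  | zero =>
    intro x hx
    rw [show ballF G x₀ 0 = {x₀} from rfl, Finset.mem_singleton] at hx
    subst hx
    exact ⟨1, 1, zero_le_one, zero_le_one, fun u lam _ _ h1 _ => by rw [h1]; norm_num⟩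
  | succ j ih =>
    intro x hx
    rw [ballF_succ] at hx
    rcases Finset.mem_union.1 hx with hx' | hx'
    · obtain ⟨C, C', hC, hC', H⟩ := ih x hx'
      exact ⟨C, C', hC, hC', fun u lam hlam hu h1 heq =>
        H u lam hlam hu h1 (fun y hy => heq y (ballF_subset_succ G x₀ j hy))⟩
    · obtain ⟨y, hy, hxy⟩ := Finset.mem_biUnion.1 hx'
      have hadj : G.Adj y x := (G.mem_neighborFinset _ _).1 hxy
      obtain ⟨C, C', hC, hC', H⟩ := ih y hy
      set K1 : ℝ := max 0 (1 + Q y) / (μ y x / deg G μ y) with hK1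
      set K2 : ℝ := max 0 (1 + Q x) / (μ x y / deg G μ x) with hK2
      have hK1n : 0 ≤ K1 :=
        div_nonneg (le_max_left _ _) (div_pos (hpos y x hadj) (hd y)).le
      have hK2n : 0 ≤ K2 :=
        div_nonneg (le_max_left _ _) (div_pos (hpos x y hadj.symm) (hd x)).le
      refine ⟨C * K2, K1 * C', mul_nonneg hC hK2n, mul_nonneg hK1n hC', ?_⟩
      intro u lam hlam hu h1 heq
      have hyj1 : y ∈ ballF G x₀ (j+1) := ballF_subset_succ G x₀ j hy
      have hxj1 : x ∈ ballF G x₀ (j+1) := hx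
      obtain ⟨hlow, hup⟩ := H u lam hlam hu h1
        (fun z hz => heq z (ballF_subset_succ G x₀ j hz))
      constructor
      · have step := harnack_step_s13 G μ hpos hd Q u lam hlam hu hadj.symm (heq x hxj1)
        -- step : u y ≤ K2 * u x
        calc (1:ℝ) ≤ C * u y := hlow
          _ ≤ C * (K2 * u x) := mul_le_mul_of_nonneg_left step hC
          _ = C * K2 * u x := by ring
      · have step := harnack_step_s13 G μ hpos hd Q u lam hlam hu hadj (heq y hyj1)
        calc u x ≤ K1 * u y := step
          _ ≤ K1 * C' := mul_le_mul_of_nonneg_left hup hK1n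

lemma zero_prop (hpos : ∀ x y, G.Adj x y → 0 < μ x y) (hd : ∀ x, 0 < deg G μ x)
    (Q : V → ℝ) (x₀ : V) (J : ℕ) (u : V → ℝ) (lam : ℝ) (hu : ∀ z, 0 ≤ u z)
    (heq : ∀ y ∈ ballF G x₀ J, -lap G μ u y + Q y * u y = lam * u y)
    (h0 : u x₀ = 0) :
    ∀ j, j ≤ J → ∀ x ∈ ballF G x₀ j, u x = 0 := by
  intro j
  induction j with
  | zero =>
    intro _ x hx
    rw [show ballF G x₀ 0 = {x₀} from rfl, Finset.mem_singleton] at hx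
    rw [hx, h0]
  | succ j ih =>
    intro hJ x hx
    rw [ballF_succ] at hx
    rcases Finset.mem_union.1 hx with hx' | hx'
    · exact ih (le_trans (Nat.le_succ j) hJ) x hx'
    · obtain ⟨y, hy, hxy⟩ := Finset.mem_biUnion.1 hx'
      have hadj : G.Adj y x := (G.mem_neighborFinset _ _).1 hxy
      have huy : u y = 0 := ih (le_trans (Nat.le_succ j) hJ) y hy
      have hyJ : y ∈ ballF G x₀ J := ballF_mono G x₀ (le_trans (Nat.le_succ j) hJ) hy
      have e := eq_form G μ Q u lam y (hd y).ne' (heq y hyJ)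
      rw [huy, mul_zero] at e
      have hterms : ∀ z ∈ G.neighborFinset y, 0 ≤ μ y z / deg G μ y * u z := by
        intro z hz
        have := (hpos y z ((G.mem_neighborFinset _ _).1 hz)).le
        have := (hd y).le
        have := hu z
        positivity
      have := (Finset.sum_eq_zero_iff_of_nonneg hterms).1 e x ((G.mem_neighborFinset _ _).2 hadj)
      have hcoef : 0 < μ y x / deg G μ y := div_pos (hpos y x hadj) (hd y)
      have := mul_eq_zero.1 this
      rcases this with h | h
      · exact absurd h hcoef.ne'
      · exact h

lemma lambda1_mono (hsymm : ∀ x y, μ x y = μ y x) (hpos : ∀ x y, G.Adj x y → 0 < μ x y)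
    (hd : ∀ x, 0 < deg G μ x) (Q : V → ℝ) {D D' : Finset V} (hne : D.Nonempty)
    (hsub : D ⊆ D') : lambda1 G μ Q D' ≤ lambda1 G μ Q D := by
  obtain ⟨w, _, hwnz, hwsupp, _, _⟩ := perron G μ hsymm hpos hd Q D hne
  obtain ⟨_, _, _, _, _, hlb'⟩ := perron G μ hsymm hpos hd Q D' (hne.mono hsub)
  apply le_csInf
  · exact ⟨_, w, hwnz, hwsupp, rfl⟩
  rintro r ⟨u, hnz, hsupp, rfl⟩
  have hnz' : ∃ x ∈ D', u x ≠ 0 := by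
    obtain ⟨x, hx, hux⟩ := hnz
    exact ⟨x, hsub hx, hux⟩
  have hsupp' : ∀ x, x ∉ D' → u x = 0 := fun x hx => hsupp x (fun h => hx (hsub h))
  have := hlb' u hnz' hsupp'
  have hnum : (∑ x ∈ D', (-lap G μ u x + Q x * u x) * u x * deg G μ x)
      = ∑ x ∈ D, (-lap G μ u x + Q x * u x) * u x * deg G μ x := by
    symm
    apply Finset.sum_subset hsub
    intro x _ hx
    rw [hsupp x hx]
    ring
  have hden : (∑ x ∈ D', (u x) ^ 2 * deg G μ x) = ∑ x ∈ D, (u x) ^ 2 * deg G μ x := by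
    symm
    apply Finset.sum_subset hsub
    intro x _ hx
    rw [hsupp x hx]
    ring
  rw [hnum, hden] at this
  exact this

end aux

/-- Existence of a principal eigenfunction: if
`λ := λ₁(X, -Δ+Q) > 0`, then there is `u > 0` on `X` with `(-Δ+Q)u = λ u` on all
of `X`. -/
theorem exists_principal_eigenfunction {V : Type*} [Countable V] (G : SimpleGraph V)
    [G.LocallyFinite]
    (μ : V → V → ℝ) (hsymm : ∀ x y, μ x y = μ y x)
    (hpos : ∀ x y, G.Adj x y → 0 < μ x y) (hconn : G.Connected)
    (Q : V → ℝ) (hl : 0 < lambda1Top G μ Q) :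
    ∃ u : V → ℝ, (∀ x, 0 < u x) ∧
      ∀ x, -lap G μ u x + Q x * u x = lambda1Top G μ Q * u x := by
  classical
  obtain ⟨x₀⟩ := hconn.nonempty
  -- every vertex has a neighbor
  have hnb : ∀ x : V, ∃ y, G.Adj x y := by
    by_contra hcon
    push_neg at hcon
    obtain ⟨v, hv⟩ := hcon
    have hdeg0 : ∀ x : V, deg G μ x = 0 := by
      intro x
      have hall : x = v := by
        obtain ⟨p⟩ := hconn.preconnected v x
        cases p with
        | nil => rfl
        | cons h q => exact absurd h (hv _)
      subst hall
      have hempty : G.neighborFinset x = ∅ := by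
        apply Finset.eq_empty_of_forall_notMem
        intro y hy
        exact hv y ((G.mem_neighborFinset _ _).1 hy)
      unfold deg
      rw [hempty, Finset.sum_empty]
    have hlam0 : ∀ D : Finset V, D.Nonempty → lambda1 G μ Q D = 0 := by
      intro D hne
      have hden : ∀ u : V → ℝ, (∑ x ∈ D, (u x) ^ 2 * deg G μ x) = 0 := by
        intro u
        apply Finset.sum_eq_zero
        intro x _
        rw [hdeg0 x, mul_zero]
      have hset : {r : ℝ | ∃ u : V → ℝ, (∃ x ∈ D, u x ≠ 0) ∧ (∀ x, x ∉ D → u x = 0) ∧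
          r = (∑ x ∈ D, (-lap G μ u x + Q x * u x) * u x * deg G μ x) /
            (∑ x ∈ D, (u x) ^ 2 * deg G μ x)} = {0} := by
        ext r
        simp only [Set.mem_setOf_eq, Set.mem_singleton_iff]
        constructor
        · rintro ⟨u, _, _, rfl⟩
          rw [hden u, div_zero]
        · rintro rfl
          obtain ⟨p, hp⟩ := hne
          refine ⟨fun x => if x ∈ D then 1 else 0, ⟨p, hp, by simp [hp]⟩,
            fun x hx => by simp [hx], ?_⟩
          rw [hden, div_zero]
      unfold lambda1
      rw [hset, csInf_singleton]
    have hT0 : lambda1Top G μ Q = 0 := by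
      have hset : {r : ℝ | ∃ D : Finset V, D.Nonempty ∧ r = lambda1 G μ Q D} = {0} := by
        ext r
        simp only [Set.mem_setOf_eq, Set.mem_singleton_iff]
        constructor
        · rintro ⟨D, hne, rfl⟩
          exact hlam0 D hne
        · rintro rfl
          exact ⟨{v}, ⟨v, Finset.mem_singleton_self v⟩,
            (hlam0 _ ⟨v, Finset.mem_singleton_self v⟩).symm⟩
      unfold lambda1Top
      rw [hset, csInf_singleton]
    rw [hT0] at hl
    exact lt_irrefl 0 hl
  have hd : ∀ x, 0 < deg G μ x := by
    intro x
    obtain ⟨y, hy⟩ := hnb x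
    apply Finset.sum_pos' (fun z hz => (hpos x z ((G.mem_neighborFinset _ _).1 hz)).le)
    exact ⟨y, (G.mem_neighborFinset _ _).2 hy, hpos x y hy⟩
  -- exhaustion indices
  have hex : ∀ x : V, ∃ j, x ∈ ballF G x₀ j := by
    intro x
    obtain ⟨p⟩ := hconn.preconnected x₀ x
    refine ⟨p.length, ?_⟩
    have := walk_mem_ballF G x₀ p 0 (Finset.mem_singleton_self x₀)
    simpa using this
  choose jf hjf using hex
  -- Perron eigenfunctions on balls
  have hper := fun j : ℕ => perron G μ hsymm hpos hd Q (ballF G x₀ j) ⟨x₀, x₀_mem_ballF G x₀ j⟩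
  choose w hw0 hwnz hwsupp hweq _ using hper
  -- the eigenvalues
  have hBB : BddBelow {r : ℝ | ∃ D : Finset V, D.Nonempty ∧ r = lambda1 G μ Q D} := by
    by_contra hc
    have h0 : lambda1Top G μ Q = 0 := Real.sInf_of_not_bddBelow hc
    rw [h0] at hl
    exact lt_irrefl 0 hl
  have hTle : ∀ j : ℕ, lambda1Top G μ Q ≤ lambda1 G μ Q (ballF G x₀ j) := by
    intro j
    exact csInf_le hBB ⟨ballF G x₀ j, ⟨x₀, x₀_mem_ballF G x₀ j⟩, rfl⟩
  have hlampos : ∀ j : ℕ, 0 < lambda1 G μ Q (ballF G x₀ j) :=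
    fun j => lt_of_lt_of_le hl (hTle j)
  have hanti : Antitone (fun j : ℕ => lambda1 G μ Q (ballF G x₀ j)) := by
    apply antitone_nat_of_succ_le
    intro j
    exact lambda1_mono G μ hsymm hpos hd Q ⟨x₀, x₀_mem_ballF G x₀ j⟩
      (ballF_subset_succ G x₀ j)
  have hrangeBB : BddBelow (Set.range (fun j : ℕ => lambda1 G μ Q (ballF G x₀ j))) := by
    refine ⟨lambda1Top G μ Q, ?_⟩
    rintro r ⟨j, rfl⟩
    exact hTle j
  have hiInf : ⨅ j : ℕ, lambda1 G μ Q (ballF G x₀ j) = lambda1Top G μ Q := by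
    apply le_antisymm
    · refine le_csInf ⟨lambda1 G μ Q (ballF G x₀ 0),
        ⟨ballF G x₀ 0, ⟨x₀, x₀_mem_ballF G x₀ 0⟩, rfl⟩⟩ ?_
      rintro r ⟨D', hne', rfl⟩
      have hsub : D' ⊆ ballF G x₀ (D'.sup jf) := by
        intro x hx
        exact ballF_mono G x₀ (Finset.le_sup hx) (hjf x)
      exact ciInf_le_of_le hrangeBB (D'.sup jf)
        (lambda1_mono G μ hsymm hpos hd Q hne' hsub)
    · exact le_ciInf hTle
  have htend : Tendsto (fun j : ℕ => lambda1 G μ Q (ballF G x₀ j)) atTop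
      (nhds (lambda1Top G μ Q)) := by
    rw [← hiInf]
    exact tendsto_atTop_ciInf hanti hrangeBB
  -- positivity of w j at x₀
  have hwx₀ : ∀ j, 0 < w j x₀ := by
    intro j
    rcases (hw0 j x₀).lt_or_eq with h | h
    · exact h
    · exfalso
      obtain ⟨p, hp, hpne⟩ := hwnz j
      exact hpne (zero_prop G μ hpos hd Q x₀ j (w j) (lambda1 G μ Q (ballF G x₀ j))
        (hw0 j) (hweq j) h.symm j le_rfl p hp)
  -- normalized eigenfunctions
  set uu : ℕ → V → ℝ := fun j x => (w j x₀)⁻¹ * w j x with huu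
  have hu0 : ∀ j z, 0 ≤ uu j z := fun j z => mul_nonneg (inv_nonneg.2 (hwx₀ j).le) (hw0 j z)
  have hu1 : ∀ j, uu j x₀ = 1 := fun j => inv_mul_cancel₀ (hwx₀ j).ne'
  have hueq : ∀ j, ∀ z ∈ ballF G x₀ j,
      -lap G μ (uu j) z + Q z * uu j z = lambda1 G μ Q (ballF G x₀ j) * uu j z := by
    intro j z hz
    have hlapz : lap G μ (uu j) z = (w j x₀)⁻¹ * lap G μ (w j) z := lap_smul G μ (w j) _ z
    have h := hweq j z hz
    show -lap G μ (uu j) z + Q z * ((w j x₀)⁻¹ * w j z)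
        = lambda1 G μ Q (ballF G x₀ j) * ((w j x₀)⁻¹ * w j z)
    rw [hlapz]
    linear_combination (w j x₀)⁻¹ * h
  -- chain bounds
  have hcb := fun x : V => chain_bound G μ hpos hd Q x₀ (jf x) x (hjf x)
  choose Cl Cu hCl hCu hbnd using hcb
  have hBND : ∀ x : V, ∀ J, jf x ≤ J → 1 ≤ Cl x * uu J x ∧ uu J x ≤ Cu x := by
    intro x J hJ
    exact hbnd x (uu J) (lambda1 G μ Q (ballF G x₀ J)) (hlampos J) (hu0 J) (hu1 J)
      (fun y hy => hueq J y (ballF_mono G x₀ hJ hy))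
  have hClpos : ∀ x, 0 < Cl x := by
    intro x
    obtain ⟨h1, _⟩ := hBND x (jf x) le_rfl
    by_contra hc
    push_neg at hc
    have : Cl x * uu (jf x) x ≤ 0 := mul_nonpos_of_nonpos_of_nonneg hc (hu0 _ _)
    linarith
  have hinvle : ∀ x : V, ∀ J, jf x ≤ J → (Cl x)⁻¹ ≤ uu J x := by
    intro x J hJ
    have h2 := (hBND x J hJ).1
    have h3 := hClpos x
    have h4 : (Cl x)⁻¹ * 1 ≤ (Cl x)⁻¹ * (Cl x * uu J x) :=
      mul_le_mul_of_nonneg_left h2 (inv_nonneg.2 h3.le)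
    rwa [mul_one, ← mul_assoc, inv_mul_cancel₀ h3.ne', one_mul] at h4
  -- ultrafilter limit
  let U : Ultrafilter ℕ := Ultrafilter.of atTop
  have hU : (U : Filter ℕ) ≤ atTop := Ultrafilter.of_le _
  have hlimex : ∀ x : V, ∃ c : ℝ, Tendsto (fun J => uu J x) (U : Filter ℕ) (nhds c) := by
    intro x
    have hev : ∀ᶠ J in (U : Filter ℕ), uu J x ∈ Set.Icc (0:ℝ) (Cu x) := by
      apply hU
      filter_upwards [eventually_ge_atTop (jf x)] with J hJ
      exact ⟨hu0 J x, (hBND x J hJ).2⟩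
    have hle : (U.map (fun J => uu J x) : Filter ℝ) ≤ Filter.principal (Set.Icc (0:ℝ) (Cu x)) := by
      rw [le_principal_iff]
      exact hev
    obtain ⟨c, _, hc⟩ := isCompact_Icc.ultrafilter_le_nhds (U.map (fun J => uu J x)) hle
    exact ⟨c, hc⟩
  choose L hL using hlimex
  have hLpos : ∀ x, 0 < L x := by
    intro x
    have hge : (Cl x)⁻¹ ≤ L x := by
      apply ge_of_tendsto (hL x)
      apply hU
      filter_upwards [eventually_ge_atTop (jf x)] with J hJ
      exact hinvle x J hJ
    exact lt_of_lt_of_le (inv_pos.2 (hClpos x)) hge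
  refine ⟨L, hLpos, ?_⟩
  intro x
  have hT1 : Tendsto (fun J => -lap G μ (uu J) x + Q x * uu J x) (U : Filter ℕ)
      (nhds (-lap G μ L x + Q x * L x)) := by
    apply Tendsto.add
    · apply Tendsto.neg
      have hrw : (fun J => lap G μ (uu J) x)
          = fun J => ∑ y ∈ G.neighborFinset x, μ x y / deg G μ x * (uu J y - uu J x) := rfl
      have hrw2 : lap G μ L x
          = ∑ y ∈ G.neighborFinset x, μ x y / deg G μ x * (L y - L x) := rfl
      rw [hrw, hrw2]
      apply tendsto_finset_sum
      intro y _
      exact Tendsto.const_mul _ ((hL y).sub (hL x))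
    · exact Tendsto.const_mul _ (hL x)
  have hT2 : Tendsto (fun J => lambda1 G μ Q (ballF G x₀ J) * uu J x) (U : Filter ℕ)
      (nhds (lambda1Top G μ Q * L x)) :=
    (htend.mono_left hU).mul (hL x)
  have hevEq : (fun J => -lap G μ (uu J) x + Q x * uu J x)
      =ᶠ[(U : Filter ℕ)] (fun J => lambda1 G μ Q (ballF G x₀ J) * uu J x) := by
    apply hU
    filter_upwards [eventually_ge_atTop (jf x)] with J hJ
    exact hueq J x (ballF_mono G x₀ hJ (hjf x))
  exact tendsto_nhds_unique ((tendsto_congr' hevEq).1 hT1) hT2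
end
end

section
/- (L² estimate for the Dirichlet problem) Let D ⊂ X be a finite subset with λ := λ₁(D, −Δ+Q) > 0, where Q : X → ℝ. If u : X → ℝ satisfies u ≥ 0, u = 0 outside D, and (−Δ + Q)u = f at every vertex of D, where f ≥ 0 on D, then ∫_D u² ≤ λ⁻² ∫_D f². -/
open Finset Filter

noncomputable section

variable {V : Type*}

/-- L² estimate for the Dirichlet problem: if `D` is finite with
`λ := λ₁(D, -Δ+Q) > 0`, `u ≥ 0` vanishes outside `D` and solves `(-Δ+Q)u = f` on
`D` with `f ≥ 0` on `D`, then `∫_D u² ≤ λ⁻² ∫_D f²`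
(where `∫_S g = ∑_{x ∈ S} g(x) d_x`). -/
theorem dirichlet_l2_estimate {V : Type*} [Countable V] (G : SimpleGraph V)
    [G.LocallyFinite]
    (μ : V → V → ℝ) (hsymm : ∀ x y, μ x y = μ y x)
    (hpos : ∀ x y, G.Adj x y → 0 < μ x y) (hconn : G.Connected)
    (Q : V → ℝ) (D : Finset V) (hl : 0 < lambda1 G μ Q D)
    (u f : V → ℝ) (hu : ∀ x, 0 ≤ u x) (hu0 : ∀ x, x ∉ D → u x = 0)
    (heq : ∀ x ∈ D, -lap G μ u x + Q x * u x = f x)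
    (hf : ∀ x ∈ D, 0 ≤ f x) :
    ∑ x ∈ D, (u x) ^ 2 * deg G μ x
      ≤ (lambda1 G μ Q D)⁻¹ ^ 2 * ∑ x ∈ D, (f x) ^ 2 * deg G μ x := by
  set lam := lambda1 G μ Q D with hlam
  have hdeg : ∀ x, 0 ≤ deg G μ x := fun x =>
    Finset.sum_nonneg fun y hy => (hpos x y (by simpa using hy)).le
  set A := ∑ x ∈ D, (u x) ^ 2 * deg G μ x with hAdef
  set B := ∑ x ∈ D, (f x) ^ 2 * deg G μ x with hBdef
  have hAnn : 0 ≤ A := Finset.sum_nonneg fun x _ => mul_nonneg (sq_nonneg _) (hdeg x)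
  have hBnn : 0 ≤ B := Finset.sum_nonneg fun x _ => mul_nonneg (sq_nonneg _) (hdeg x)
  rcases eq_or_lt_of_le hAnn with hA0 | hApos
  · rw [← hA0]
    exact mul_nonneg (sq_nonneg _) hBnn
  -- u is not identically zero on D
  have hune : ∃ x ∈ D, u x ≠ 0 := by
    by_contra h
    push_neg at h
    have : A = 0 := Finset.sum_eq_zero fun x hx => by rw [h x hx]; ring
    exact absurd this (ne_of_gt hApos)
  -- the Rayleigh quotient of u belongs to the defining set of lambda1
  have hmem : (∑ x ∈ D, (-lap G μ u x + Q x * u x) * u x * deg G μ x) / A ∈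
      {r : ℝ | ∃ v : V → ℝ, (∃ x ∈ D, v x ≠ 0) ∧ (∀ x, x ∉ D → v x = 0) ∧
        r = (∑ x ∈ D, (-lap G μ v x + Q x * v x) * v x * deg G μ x) /
            (∑ x ∈ D, (v x) ^ 2 * deg G μ x)} := ⟨u, hune, hu0, rfl⟩
  have hbdd : BddBelow {r : ℝ | ∃ v : V → ℝ, (∃ x ∈ D, v x ≠ 0) ∧ (∀ x, x ∉ D → v x = 0) ∧
        r = (∑ x ∈ D, (-lap G μ v x + Q x * v x) * v x * deg G μ x) /
            (∑ x ∈ D, (v x) ^ 2 * deg G μ x)} := by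
    by_contra h
    have : lam = 0 := Real.sInf_of_not_bddBelow h
    exact absurd this (ne_of_gt hl)
  have hle : lam ≤ (∑ x ∈ D, (-lap G μ u x + Q x * u x) * u x * deg G μ x) / A :=
    csInf_le hbdd hmem
  -- rewrite the numerator using the equation
  have hnum : (∑ x ∈ D, (-lap G μ u x + Q x * u x) * u x * deg G μ x)
      = ∑ x ∈ D, f x * u x * deg G μ x :=
    Finset.sum_congr rfl fun x hx => by rw [heq x hx]
  set C := ∑ x ∈ D, f x * u x * deg G μ x with hCdef
  have hlamA : lam * A ≤ C := by
    have := hle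
    rw [hnum] at this
    exact (le_div_iff₀ hApos).mp this
  -- Cauchy-Schwarz : C^2 ≤ B * A
  have hCS : C ^ 2 ≤ B * A := by
    calc C ^ 2 = (∑ x ∈ D, (f x * Real.sqrt (deg G μ x)) * (u x * Real.sqrt (deg G μ x))) ^ 2 := by
          congr 1
          refine Finset.sum_congr rfl fun x _ => ?_
          have : Real.sqrt (deg G μ x) * Real.sqrt (deg G μ x) = deg G μ x :=
            Real.mul_self_sqrt (hdeg x)
          linear_combination (-(f x * u x)) * this
      _ ≤ (∑ x ∈ D, (f x * Real.sqrt (deg G μ x)) ^ 2) *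
            ∑ x ∈ D, (u x * Real.sqrt (deg G μ x)) ^ 2 :=
          Finset.sum_mul_sq_le_sq_mul_sq D _ _
      _ = B * A := by
          congr 1 <;> refine Finset.sum_congr rfl fun x _ => ?_ <;>
            rw [mul_pow, Real.sq_sqrt (hdeg x)]
  have hlamApos : 0 < lam * A := mul_pos hl hApos
  have hsq : (lam * A) ^ 2 ≤ C ^ 2 := by
    apply pow_le_pow_left₀ hlamApos.le hlamA
  have hkey : lam ^ 2 * A ^ 2 ≤ B * A := by nlinarith
  have hfin : lam ^ 2 * A ≤ B := by nlinarith
  have hlam2 : 0 < lam ^ 2 := pow_pos hl 2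
  rw [inv_pow]
  calc A ≤ (lam ^ 2)⁻¹ * (lam ^ 2 * A) := by
        rw [← mul_assoc, inv_mul_cancel₀ (ne_of_gt hlam2), one_mul]
    _ ≤ (lam ^ 2)⁻¹ * B := by
        exact mul_le_mul_of_nonneg_left hfin (inv_nonneg.mpr hlam2.le)
end
end

section
/- (Existence of a global Green function under a vanishing superharmonic function) Fix x₀ ∈ X and let B(j) = { x ∈ X : d(x,x₀) < j }. Assume there exists a function φ : X → ℝ with φ > 0 on X, Δφ ≤ 0 on X, and φ(x) → 0 as d(x,x₀) → ∞. Then for all x ≠ y in X the limit G(x,y) = lim_{j→∞} G_j(x,y) of the Dirichlet Green functions G_j of B(j) exists and is finite, and G is a global Green function on X. -/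
open Finset Filter

noncomputable section

variable {V : Type*}

set_option linter.unusedSectionVars false
set_option maxHeartbeats 1000000

section Aux

variable {V : Type*} [DecidableEq V] {G : SimpleGraph V} [G.LocallyFinite] {μ : V → V → ℝ}

lemma lap_sub (u v : V → ℝ) (x : V) :
    lap G μ (fun z => u z - v z) x = lap G μ u x - lap G μ v x := by
  unfold lap
  rw [← Finset.sum_sub_distrib]
  exact Finset.sum_congr rfl fun z _ => by ring

lemma lap_const_mul (c : ℝ) (u : V → ℝ) (x : V) :
    lap G μ (fun z => c * u z) x = c * lap G μ u x := by
  unfold lap; rw [Finset.mul_sum]; exact Finset.sum_congr rfl fun z _ => by ring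

lemma lap_const (c : ℝ) (x : V) : lap G μ (fun _ => c) x = 0 := by
  unfold lap; simp

lemma exists_adj (hconn : G.Connected) [Nontrivial V] (x : V) : ∃ z, G.Adj x z := by
  obtain ⟨z, hz⟩ := exists_ne x
  obtain ⟨p⟩ := hconn x z
  cases p with
  | nil => exact absurd rfl hz
  | cons h q => exact ⟨_, h⟩

lemma deg_pos (hconn : G.Connected) (hpos : ∀ x y, G.Adj x y → 0 < μ x y) [Nontrivial V]
    (x : V) : 0 < deg G μ x := by
  obtain ⟨z, hz⟩ := exists_adj hconn x
  exact Finset.sum_pos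
    (fun y hy => hpos x y (by simpa [SimpleGraph.mem_neighborFinset] using hy))
    ⟨z, by simpa [SimpleGraph.mem_neighborFinset] using hz⟩

lemma deg_mul_lap {x : V} (hd : deg G μ x ≠ 0) (u : V → ℝ) :
    deg G μ x * lap G μ u x = ∑ z ∈ G.neighborFinset x, μ x z * (u z - u x) := by
  unfold lap; rw [Finset.mul_sum]
  exact Finset.sum_congr rfl fun z _ => by field_simp

lemma walk_prop {A : Set V} (hA : ∀ a z, a ∈ A → G.Adj a z → z ∈ A) :
    ∀ {x w : V} (p : G.Walk x w), x ∈ A → w ∈ A := by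
  intro x w p
  induction p with
  | nil => exact id
  | cons h q ih => exact fun hx => ih (hA _ _ hx h)


lemma min_principle [Infinite V] (hconn : G.Connected)
    (hpos : ∀ x y, G.Adj x y → 0 < μ x y) (S : Finset V) (v : V → ℝ)
    (hsup : ∀ x ∈ S, lap G μ v x ≤ 0) (hout : ∀ x, x ∉ S → 0 ≤ v x) :
    ∀ x, 0 ≤ v x := by
  by_contra hc
  push_neg at hc
  obtain ⟨x, hx⟩ := hc
  have hxS : x ∈ S := by
    by_contra h; exact absurd (hout x h) (not_le.mpr hx)
  have hSne : S.Nonempty := ⟨x, hxS⟩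
  set m := S.inf' hSne v with hm
  have hmneg : m < 0 := lt_of_le_of_lt (Finset.inf'_le _ hxS) hx
  have hglob : ∀ z, m ≤ v z := by
    intro z
    by_cases hz : z ∈ S
    · exact Finset.inf'_le _ hz
    · exact le_trans hmneg.le (hout z hz)
  have hA : ∀ a z, v a = m → G.Adj a z → v z = m := by
    intro a z ha hadj
    have haS : a ∈ S := by
      by_contra h
      exact absurd (ha ▸ hout a h) (not_le.mpr hmneg)
    have hterm : ∀ y ∈ G.neighborFinset a, 0 ≤ μ a y / deg G μ a * (v y - v a) := by
      intro y hy
      have hadj' : G.Adj a y := by simpa [SimpleGraph.mem_neighborFinset] using hy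
      have h1 : 0 ≤ v y - v a := by rw [ha]; linarith [hglob y]
      have h2 : 0 ≤ μ a y / deg G μ a :=
        div_nonneg (hpos a y hadj').le (deg_pos hconn hpos a).le
      exact mul_nonneg h2 h1
    have hlap : lap G μ v a = 0 :=
      le_antisymm (hsup a haS) (Finset.sum_nonneg hterm)
    have hall := (Finset.sum_eq_zero_iff_of_nonneg hterm).mp hlap
    have hz : z ∈ G.neighborFinset a := (SimpleGraph.mem_neighborFinset _ _ _).mpr hadj
    have := hall z hz
    have hne : μ a z / deg G μ a ≠ 0 :=
      ne_of_gt (div_pos (hpos a z hadj) (deg_pos hconn hpos a))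
    have : v z - v a = 0 := by
      rcases mul_eq_zero.mp this with h | h
      · exact absurd h hne
      · exact h
    rw [ha] at this; linarith
  obtain ⟨x', hx'S, hx'⟩ := Finset.exists_mem_eq_inf' hSne v
  obtain ⟨w, hw⟩ := Infinite.exists_notMem_finset S
  have hvw : v w = m := by
    obtain ⟨p⟩ := hconn x' w
    exact walk_prop (A := {z | v z = m}) (fun a z haz => hA a z haz) p hx'.symm
  exact absurd (hvw ▸ hout w hw) (not_le.mpr hmneg)

lemma ball_finite (hconn : G.Connected) (x₀ : V) :
    ∀ n : ℕ, {x : V | G.dist x x₀ < n}.Finite := by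
  intro n
  induction n with
  | zero => simp
  | succ n ih =>
    have hsub : {x : V | G.dist x x₀ < n + 1} ⊆
        {x₀} ∪ ⋃ z ∈ {x : V | G.dist x x₀ < n}, (G.neighborSet z) := by
      intro x hx
      simp only [Set.mem_setOf_eq] at hx
      by_cases hxx : x = x₀
      · exact Or.inl hxx
      · have hr : G.Reachable x x₀ := hconn x x₀
        have hd : 0 < G.dist x x₀ := hr.pos_dist_of_ne hxx
        obtain ⟨p, hp⟩ := hr.exists_walk_length_eq_dist
        cases p with
        | nil => simp only [SimpleGraph.Walk.length_nil] at hp; omega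
        | @cons _ z _ h q =>
          right
          rw [SimpleGraph.Walk.length_cons] at hp
          have hzq : G.dist z x₀ < n := by
            have := SimpleGraph.dist_le q
            omega
          exact Set.mem_biUnion hzq ((SimpleGraph.mem_neighborSet _ _ _).mpr h.symm)
    exact (((Set.finite_singleton x₀).union
      (ih.biUnion fun z _ => (G.neighborSet z).toFinite)).subset hsub)

lemma path_getVert_inj {x w : V} {p : G.Walk x w} (hp : p.IsPath) :
    ∀ i j, i ≤ p.length → j ≤ p.length → p.getVert i = p.getVert j → i = j := by
  induction p with
  | nil => intro i j hi hj _; simp only [SimpleGraph.Walk.length_nil] at hi hj; omega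
  | @cons a b c h q ih =>
    have hq : q.IsPath := hp.of_cons
    have hna : a ∉ q.support := (SimpleGraph.Walk.cons_isPath_iff h q).mp hp |>.2
    intro i j hi hj hij
    rw [SimpleGraph.Walk.length_cons] at hi hj
    match i, j with
    | 0, 0 => rfl
    | 0, (j+1) =>
      exfalso
      apply hna
      rw [SimpleGraph.Walk.mem_support_iff_exists_getVert]
      exact ⟨j, by simpa [SimpleGraph.Walk.getVert_cons_succ] using hij.symm, by omega⟩
    | (i+1), 0 =>
      exfalso
      apply hna
      rw [SimpleGraph.Walk.mem_support_iff_exists_getVert]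
      exact ⟨i, by simpa [SimpleGraph.Walk.getVert_cons_succ] using hij, by omega⟩
    | (i+1), (j+1) =>
      have := ih hq i j (by omega) (by omega)
        (by simpa [SimpleGraph.Walk.getVert_cons_succ] using hij)
      omega


lemma green_mono [Infinite V] (hconn : G.Connected)
    (hpos : ∀ x y, G.Adj x y → 0 < μ x y) (x₀ : V) (Gj : ℕ → V → V → ℝ)
    (hGj : ∀ j, IsDirichletGreenOnBall G μ x₀ j (Gj j)) {y : V} {j k : ℕ}
    (hj : G.dist y x₀ < j) (hjk : j ≤ k) : ∀ x, Gj j x y ≤ Gj k x y := by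
  have hk : G.dist y x₀ < k := lt_of_lt_of_le hj hjk
  have S := (ball_finite (G := G) hconn x₀ j).toFinset
  have key := min_principle (G := G) (μ := μ) hconn hpos
    (ball_finite (G := G) hconn x₀ j).toFinset
    (fun x => Gj k x y - Gj j x y) ?_ ?_
  · intro x; linarith [key x]
  · intro x hxS
    have hx : G.dist x x₀ < j := by simpa using hxS
    have e := lap_sub (G := G) (μ := μ) (fun z => Gj k z y) (fun z => Gj j z y) x
    rw [e, ((hGj k).2 y hk).1 x (lt_of_lt_of_le hx hjk), ((hGj j).2 y hj).1 x hx]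
    simp
  · intro x hxS
    have hx : ¬ G.dist x x₀ < j := by simpa using hxS
    show 0 ≤ Gj k x y - Gj j x y
    rw [((hGj j).2 y hj).2 x hx]
    simpa using (hGj k).1 x y

lemma green_le_diag [Infinite V] (hconn : G.Connected)
    (hpos : ∀ x y, G.Adj x y → 0 < μ x y) (x₀ : V) (Gj : ℕ → V → V → ℝ)
    (hGj : ∀ j, IsDirichletGreenOnBall G μ x₀ j (Gj j)) {y : V} {j : ℕ}
    (hj : G.dist y x₀ < j) : ∀ x, Gj j x y ≤ Gj j y y := by
  have key := min_principle (G := G) (μ := μ) hconn hpos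
    (((ball_finite (G := G) hconn x₀ j).toFinset).erase y)
    (fun x => Gj j y y - Gj j x y) ?_ ?_
  · intro x; linarith [key x]
  · intro x hxS
    have hxy : x ≠ y := (Finset.mem_erase.mp hxS).1
    have hx : G.dist x x₀ < j := by
      simpa using (Finset.mem_erase.mp hxS).2
    have e := lap_sub (G := G) (μ := μ) (fun _ => Gj j y y) (fun z => Gj j z y) x
    rw [e, ((hGj j).2 y hj).1 x hx, lap_const]
    simp [hxy]
  · intro x hxS
    by_cases hxy : x = y
    · subst hxy; simp
    · have hx : ¬ G.dist x x₀ < j := by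
        intro hc
        exact hxS (Finset.mem_erase.mpr ⟨hxy, by simpa using hc⟩)
      show 0 ≤ Gj j y y - Gj j x y
      rw [((hGj j).2 y hj).2 x hx]
      simpa using (hGj j).1 y y

lemma green_le_phi [Infinite V] (hconn : G.Connected)
    (hpos : ∀ x y, G.Adj x y → 0 < μ x y) (x₀ : V)
    (φ : V → ℝ) (hφpos : ∀ x, 0 < φ x) (hφsuper : ∀ x, lap G μ φ x ≤ 0)
    (Gj : ℕ → V → V → ℝ)
    (hGj : ∀ j, IsDirichletGreenOnBall G μ x₀ j (Gj j)) {y : V} {j : ℕ}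
    (hj : G.dist y x₀ < j) : ∀ x, Gj j x y ≤ Gj j y y / φ y * φ x := by
  have hc : 0 ≤ Gj j y y / φ y := div_nonneg ((hGj j).1 y y) (hφpos y).le
  have key := min_principle (G := G) (μ := μ) hconn hpos
    (((ball_finite (G := G) hconn x₀ j).toFinset).erase y)
    (fun x => Gj j y y / φ y * φ x - Gj j x y) ?_ ?_
  · intro x; linarith [key x]
  · intro x hxS
    have hxy : x ≠ y := (Finset.mem_erase.mp hxS).1
    have hx : G.dist x x₀ < j := by
      simpa using (Finset.mem_erase.mp hxS).2
    have e := lap_sub (G := G) (μ := μ) (fun z => Gj j y y / φ y * φ z)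
      (fun z => Gj j z y) x
    rw [e, ((hGj j).2 y hj).1 x hx, lap_const_mul]
    simp only [hxy, if_false]
    have := mul_nonpos_of_nonneg_of_nonpos hc (hφsuper x)
    linarith
  · intro x hxS
    by_cases hxy : x = y
    · subst hxy
      show 0 ≤ Gj j x x / φ x * φ x - Gj j x x
      rw [div_mul_cancel₀ _ (ne_of_gt (hφpos x))]
      simp
    · have hx : ¬ G.dist x x₀ < j := by
        intro hcc
        exact hxS (Finset.mem_erase.mpr ⟨hxy, by simpa using hcc⟩)
      show 0 ≤ Gj j y y / φ y * φ x - Gj j x y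
      rw [((hGj j).2 y hj).2 x hx]
      simpa using mul_nonneg hc (hφpos x).le


lemma energy_identity [Infinite V] [DecidableRel G.Adj] (hconn : G.Connected)
    (hsymm : ∀ x y, μ x y = μ y x)
    (hpos : ∀ x y, G.Adj x y → 0 < μ x y) (x₀ : V) (Gj : ℕ → V → V → ℝ)
    (hGj : ∀ j, IsDirichletGreenOnBall G μ x₀ j (Gj j)) {y : V} {j : ℕ}
    (hj : G.dist y x₀ < j) (S : Finset V) (hS : ∀ x, x ∈ S ↔ G.dist x x₀ < j + 1) :
    ∑ p ∈ (S ×ˢ S).filter (fun p => G.Adj p.1 p.2),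
      μ p.1 p.2 * (Gj j p.1 y - Gj j p.2 y) ^ 2
      = 2 * (deg G μ y * Gj j y y) := by
  set g : V → ℝ := fun x => Gj j x y with hg
  set P := (S ×ˢ S).filter (fun p => G.Adj p.1 p.2) with hP
  have hyS : y ∈ S := (hS y).mpr (by omega)
  -- Claim A
  have hA : ∑ p ∈ P, μ p.1 p.2 * (g p.1 - g p.2) * g p.1 = deg G μ y * g y := by
    rw [hP, Finset.sum_filter, Finset.sum_product]
    have hinner : ∀ x ∈ S,
        (∑ z ∈ S, if G.Adj x z then μ x z * (g x - g z) * g x else 0)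
        = deg G μ x * (if x = y then 1 else 0) * g x := by
      intro x hxS
      rw [← Finset.sum_filter]
      have hsub : S.filter (fun z => G.Adj x z) ⊆ G.neighborFinset x := by
        intro z hz
        exact (SimpleGraph.mem_neighborFinset _ _ _).mpr (Finset.mem_filter.mp hz).2
      by_cases hx : G.dist x x₀ < j
      · have hzero : ∀ z ∈ G.neighborFinset x, z ∉ S.filter (fun z => G.Adj x z) →
            μ x z * (g x - g z) * g x = 0 := by
          intro z hz hznot
          exfalso
          have hadj : G.Adj x z := (SimpleGraph.mem_neighborFinset _ _ _).mp hz
          have hzS : z ∉ S := fun hc => hznot (Finset.mem_filter.mpr ⟨hc, hadj⟩)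
          apply hzS
          rw [hS]
          have h1 : G.dist z x = 1 := SimpleGraph.dist_eq_one_iff_adj.mpr hadj.symm
          have := hconn.dist_triangle (u := z) (v := x) (w := x₀)
          omega
        rw [Finset.sum_subset hsub hzero]
        have hd : deg G μ x ≠ 0 := ne_of_gt (deg_pos hconn hpos x)
        have hdl := ((hGj j).2 y hj).1 x hx
        have e1 : ∑ z ∈ G.neighborFinset x, μ x z * (g x - g z) * g x
            = (∑ z ∈ G.neighborFinset x, μ x z * (g z - g x)) * (-g x) := by
          rw [Finset.sum_mul]
          exact Finset.sum_congr rfl fun z _ => by ring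
        rw [e1, ← deg_mul_lap hd, hdl]
        ring
      · have hgx : g x = 0 := ((hGj j).2 y hj).2 x hx
        rw [Finset.sum_eq_zero (fun z _ => by rw [hgx]; ring), hgx]
        ring
    rw [Finset.sum_congr rfl hinner, Finset.sum_eq_single_of_mem y hyS
      (fun x _ hne => by simp [hne])]
    simp
  -- swap invariance
  have hswapmem : ∀ p : V × V, p ∈ P ↔ Prod.swap p ∈ P := by
    intro p
    simp only [hP, Finset.mem_filter, Finset.mem_product, Prod.fst_swap, Prod.snd_swap]
    constructor
    · rintro ⟨⟨h1, h2⟩, h3⟩; exact ⟨⟨h2, h1⟩, h3.symm⟩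
    · rintro ⟨⟨h1, h2⟩, h3⟩; exact ⟨⟨h2, h1⟩, h3.symm⟩
  have hB : ∑ p ∈ P, μ p.1 p.2 * (g p.1 - g p.2) * g p.2
      = -(deg G μ y * g y) := by
    have hswap : ∑ p ∈ P, μ p.1 p.2 * (g p.1 - g p.2) * g p.2
        = ∑ p ∈ P, μ p.2 p.1 * (g p.2 - g p.1) * g p.1 := by
      apply Finset.sum_equiv (Equiv.prodComm V V)
      · intro p; exact hswapmem p
      · intro p hp
        simp only [Equiv.prodComm_apply, Prod.fst_swap, Prod.snd_swap]
    rw [hswap, ← hA, ← Finset.sum_neg_distrib]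
    exact Finset.sum_congr rfl fun p _ => by rw [hsymm p.2 p.1]; ring
  have : ∑ p ∈ P, μ p.1 p.2 * (g p.1 - g p.2) ^ 2
      = (∑ p ∈ P, μ p.1 p.2 * (g p.1 - g p.2) * g p.1)
        - ∑ p ∈ P, μ p.1 p.2 * (g p.1 - g p.2) * g p.2 := by
    rw [← Finset.sum_sub_distrib]
    exact Finset.sum_congr rfl fun p _ => by ring
  rw [this, hA, hB]
  ring


lemma green_bounded [Infinite V] [DecidableRel G.Adj] (hconn : G.Connected)
    (hsymm : ∀ x y, μ x y = μ y x)
    (hpos : ∀ x y, G.Adj x y → 0 < μ x y) (x₀ : V)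
    (φ : V → ℝ) (hφpos : ∀ x, 0 < φ x) (hφsuper : ∀ x, lap G μ φ x ≤ 0)
    (hφvanish : ∀ ε : ℝ, 0 < ε → ∃ N : ℕ, ∀ x, N ≤ G.dist x x₀ → φ x < ε)
    (Gj : ℕ → V → V → ℝ)
    (hGj : ∀ j, IsDirichletGreenOnBall G μ x₀ j (Gj j)) (y : V) :
    ∃ M : ℝ, ∀ j, G.dist y x₀ < j → ∀ x, Gj j x y ≤ M := by
  set a := φ y with ha
  obtain ⟨N, hN⟩ := hφvanish (a / 2) (half_pos (hφpos y))
  obtain ⟨b, hb⟩ := ((ball_finite (G := G) hconn x₀ N).infinite_compl).nonempty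
  have hbN : N ≤ G.dist b x₀ := by
    simp only [Set.mem_compl_iff, Set.mem_setOf_eq, not_lt] at hb
    exact hb
  have hφb : φ b < a / 2 := hN b hbN
  obtain ⟨p, hpath, hplen⟩ := hconn.exists_path_of_dist y b
  set L := p.length with hL
  have hyb : y ≠ b := by
    intro h
    subst h
    have := hφpos y
    simp only [← ha] at hφb
    linarith
  have hLpos : 0 < L := by
    rcases Nat.eq_zero_or_pos L with h | h
    · exact absurd (SimpleGraph.Walk.eq_of_length_eq_zero h) hyb
    · exact h
  have hrange : (Finset.range L).Nonempty := ⟨0, Finset.mem_range.mpr hLpos⟩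
  set μmin := (Finset.range L).inf' hrange (fun i => μ (p.getVert i) (p.getVert (i + 1)))
    with hμm
  have hadji : ∀ i, i < L → G.Adj (p.getVert i) (p.getVert (i + 1)) :=
    fun i hi => p.adj_getVert_succ hi
  have hμminpos : 0 < μmin := by
    rw [hμm, Finset.lt_inf'_iff]
    intro i hi
    exact hpos _ _ (hadji i (Finset.mem_range.mp hi))
  have hdegy : 0 < deg G μ y := deg_pos hconn hpos y
  set J := L + G.dist y x₀ + 1 with hJ
  set M := 8 * (L : ℝ) * deg G μ y / μmin with hM
  have hMpos : 0 < M := by positivity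
  -- vertices of the path are near x₀
  have hvert : ∀ i : ℕ, G.dist (p.getVert i) x₀ ≤ i + G.dist y x₀ := by
    intro i
    induction i with
    | zero => simp [p.getVert_zero]
    | succ i ih =>
      by_cases hi : i < L
      · have hadj := (hadji i hi).symm
        have h1 : G.dist (p.getVert (i + 1)) (p.getVert i) = 1 :=
          SimpleGraph.dist_eq_one_iff_adj.mpr hadj
        have htri := hconn.dist_triangle (u := p.getVert (i + 1)) (v := p.getVert i)
          (w := x₀)
        omega
      · have : p.getVert (i + 1) = p.getVert i := by
          rw [p.getVert_of_length_le (by omega), p.getVert_of_length_le (by omega)]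
        rw [this]; omega
  -- main bound for large j
  have key : ∀ j, J ≤ j → Gj j y y ≤ M := by
    intro j hJj
    have hj : G.dist y x₀ < j := by omega
    set S := (ball_finite (G := G) hconn x₀ (j + 1)).toFinset with hSdef
    have hSmem : ∀ x, x ∈ S ↔ G.dist x x₀ < j + 1 := by
      intro x; simp [hSdef]
    set g : V → ℝ := fun x => Gj j x y with hg
    set Γ := Gj j y y with hΓ
    have hΓnn : 0 ≤ Γ := (hGj j).1 y y
    have hE := energy_identity hconn hsymm hpos x₀ Gj hGj hj S hSmem
    set P := (S ×ˢ S).filter (fun p => G.Adj p.1 p.2) with hPdef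
    -- path vertices in S
    have hvS : ∀ i, i ≤ L → p.getVert i ∈ S := by
      intro i hi
      rw [hSmem]
      have := hvert i
      omega
    set es : ℕ → V × V := fun i => (p.getVert i, p.getVert (i + 1)) with hes
    have himg : ∀ i ∈ Finset.range L, es i ∈ P := by
      intro i hi
      have hiL := Finset.mem_range.mp hi
      rw [hPdef, Finset.mem_filter, Finset.mem_product]
      exact ⟨⟨hvS i (by omega), hvS (i + 1) (by omega)⟩, hadji i hiL⟩
    have hinj : ∀ i ∈ Finset.range L, ∀ i' ∈ Finset.range L, es i = es i' → i = i' := by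
      intro i hi i' hi' hee
      have h1 : p.getVert i = p.getVert i' := congrArg Prod.fst hee
      exact path_getVert_inj hpath i i'
        (by have := Finset.mem_range.mp hi; omega)
        (by have := Finset.mem_range.mp hi'; omega) h1
    -- bound on the path sum
    have sum1 : ∑ i ∈ Finset.range L,
        μ (p.getVert i) (p.getVert (i + 1)) * (g (p.getVert i) - g (p.getVert (i + 1))) ^ 2
        ≤ 2 * (deg G μ y * Γ) := by
      rw [← hE]
      have e1 : ∑ i ∈ Finset.range L,
          μ (p.getVert i) (p.getVert (i + 1)) * (g (p.getVert i) - g (p.getVert (i + 1))) ^ 2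
          = ∑ q ∈ (Finset.range L).image es, μ q.1 q.2 * (g q.1 - g q.2) ^ 2 := by
        rw [Finset.sum_image hinj]
      rw [e1]
      apply Finset.sum_le_sum_of_subset_of_nonneg
      · intro q hq
        obtain ⟨i, hi, hiq⟩ := Finset.mem_image.mp hq
        exact hiq ▸ himg i hi
      · intro q hq _
        have hadj : G.Adj q.1 q.2 := (Finset.mem_filter.mp hq).2
        exact mul_nonneg (hpos _ _ hadj).le (sq_nonneg _)
    -- telescoping
    have htel : ∑ i ∈ Finset.range L, (g (p.getVert i) - g (p.getVert (i + 1)))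
        = Γ - g b := by
      rw [Finset.sum_range_sub' (f := fun i => g (p.getVert i))]
      rw [p.getVert_zero]
      have : p.getVert L = b := p.getVert_length
      rw [this, hg, hΓ]
    -- bound on g b
    have hgb : g b ≤ Γ / 2 := by
      have h1 := green_le_phi hconn hpos x₀ φ hφpos hφsuper Gj hGj hj b
      have h2 : Γ / a * φ b ≤ Γ / a * (a / 2) :=
        mul_le_mul_of_nonneg_left hφb.le (div_nonneg hΓnn (hφpos y).le)
      have h3 : Γ / a * (a / 2) = Γ / 2 := by
        rw [div_mul_div_comm, mul_comm Γ a, mul_div_mul_left _ _ (ne_of_gt (hφpos y))]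
      calc g b ≤ Γ / a * φ b := h1
        _ ≤ Γ / a * (a / 2) := h2
        _ = Γ / 2 := h3
    have hΓhalf : Γ / 2 ≤ Γ - g b := by linarith
    -- Cauchy-Schwarz
    have hCS : (Γ - g b) ^ 2 ≤ (L : ℝ) * ∑ i ∈ Finset.range L,
        (g (p.getVert i) - g (p.getVert (i + 1))) ^ 2 := by
      have := sq_sum_le_card_mul_sum_sq
        (s := Finset.range L) (f := fun i => g (p.getVert i) - g (p.getVert (i + 1)))
      rw [htel] at this
      simpa using this
    -- μmin bound
    have hμsum : μmin * ∑ i ∈ Finset.range L, (g (p.getVert i) - g (p.getVert (i + 1))) ^ 2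
        ≤ ∑ i ∈ Finset.range L,
          μ (p.getVert i) (p.getVert (i + 1)) * (g (p.getVert i) - g (p.getVert (i + 1))) ^ 2 := by
      rw [Finset.mul_sum]
      apply Finset.sum_le_sum
      intro i hi
      have : μmin ≤ μ (p.getVert i) (p.getVert (i + 1)) := Finset.inf'_le _ hi
      exact mul_le_mul_of_nonneg_right this (sq_nonneg _)
    -- combine
    have hfinal : μmin * (Γ / 2) ^ 2 ≤ (L : ℝ) * (2 * (deg G μ y * Γ)) := by
      have h1 : (Γ / 2) ^ 2 ≤ (Γ - g b) ^ 2 := by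
        apply pow_le_pow_left₀ (by linarith) hΓhalf 2
      have h2 : μmin * (Γ / 2) ^ 2 ≤ μmin * ((L : ℝ) * ∑ i ∈ Finset.range L,
          (g (p.getVert i) - g (p.getVert (i + 1))) ^ 2) :=
        mul_le_mul_of_nonneg_left (le_trans h1 hCS) hμminpos.le
      have h3 : μmin * ((L : ℝ) * ∑ i ∈ Finset.range L,
          (g (p.getVert i) - g (p.getVert (i + 1))) ^ 2)
          = (L : ℝ) * (μmin * ∑ i ∈ Finset.range L,
          (g (p.getVert i) - g (p.getVert (i + 1))) ^ 2) := by ring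
      have h4 : (L : ℝ) * (μmin * ∑ i ∈ Finset.range L,
          (g (p.getVert i) - g (p.getVert (i + 1))) ^ 2)
          ≤ (L : ℝ) * (2 * (deg G μ y * Γ)) := by
        apply mul_le_mul_of_nonneg_left (le_trans hμsum sum1) (by positivity)
      linarith
    -- conclude Γ ≤ M
    rcases eq_or_lt_of_le hΓnn with h0 | hΓpos
    · rw [← h0]; exact hMpos.le
    · have h5 : μmin * Γ * Γ ≤ 8 * (L : ℝ) * deg G μ y * Γ := by nlinarith
      have h6 : μmin * Γ ≤ 8 * (L : ℝ) * deg G μ y :=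
        le_of_mul_le_mul_right (by linarith [h5]) hΓpos
      rw [hM, le_div_iff₀ hμminpos]
      linarith
  refine ⟨M, fun j hj x => ?_⟩
  calc Gj j x y ≤ Gj (max j J) x y := green_mono hconn hpos x₀ Gj hGj hj (le_max_left _ _) x
    _ ≤ Gj (max j J) y y := green_le_diag hconn hpos x₀ Gj hGj
        (lt_of_lt_of_le hj (le_max_left _ _)) x
    _ ≤ M := key _ (le_max_right _ _)

end Aux

/-- Existence of a global Green function under a vanishing
superharmonic function: if there is `φ > 0` with `Δφ ≤ 0` and `φ(x) → 0` as
`d(x,x₀) → ∞`, then the Dirichlet Green functions `G_j` of the balls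
`B(j) = {x | d(x,x₀) < j}` converge pointwise (for `x ≠ y`) to a global Green
function `G` on `X`, i.e. `G ≥ 0` and `Δ_x G(x,y) = -δ_y(x)` for all `x, y`. -/
theorem green_exists_of_vanishing_superharmonic {V : Type*} [Countable V]
    [DecidableEq V] (G : SimpleGraph V) [G.LocallyFinite]
    (μ : V → V → ℝ) (hsymm : ∀ x y, μ x y = μ y x)
    (hpos : ∀ x y, G.Adj x y → 0 < μ x y) (hconn : G.Connected)
    (x₀ : V)
    (φ : V → ℝ) (hφpos : ∀ x, 0 < φ x) (hφsuper : ∀ x, lap G μ φ x ≤ 0)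
    (hφvanish : ∀ ε : ℝ, 0 < ε → ∃ N : ℕ, ∀ x, N ≤ G.dist x x₀ → φ x < ε)
    (Gj : ℕ → V → V → ℝ)
    (hGj : ∀ j, IsDirichletGreenOnBall G μ x₀ j (Gj j)) :
    ∃ Ggl : V → V → ℝ,
      (∀ x y : V, x ≠ y → Tendsto (fun j => Gj j x y) atTop (nhds (Ggl x y))) ∧
      (∀ x y, 0 ≤ Ggl x y) ∧
      (∀ y x, lap G μ (fun z => Ggl z y) x = -(if x = y then 1 else 0)) := by
  haveI : DecidableRel G.Adj := Classical.decRel _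
  cases finite_or_infinite V with
  | inl hfin =>
    exfalso
    haveI : Fintype V := Fintype.ofFinite V
    rcases subsingleton_or_nontrivial V with hsub | hnt
    · have h0 : G.dist x₀ x₀ < 1 := by
        rw [SimpleGraph.dist_self]; omega
      have hlap := ((hGj 1).2 x₀ h0).1 x₀ h0
      have hempty : G.neighborFinset x₀ = ∅ := by
        rw [Finset.eq_empty_iff_forall_notMem]
        intro z hz
        have hadj : G.Adj x₀ z := (SimpleGraph.mem_neighborFinset _ _ _).mp hz
        have : z = x₀ := Subsingleton.elim _ _
        rw [this] at hadj
        exact G.irrefl hadj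
      rw [show lap G μ (fun z => Gj 1 z x₀) x₀ = 0 by unfold lap; rw [hempty]; simp]
        at hlap
      simp at hlap
    · set D := Finset.univ.sup (fun x => G.dist x x₀) with hD
      set j := D + 1 with hj
      have hA : ∀ x : V, G.dist x x₀ < j := by
        intro x
        have h := Finset.le_sup (f := fun x => G.dist x x₀) (Finset.mem_univ x)
        exact Nat.lt_succ_of_le h
      set g : V → ℝ := fun z => Gj j z x₀ with hg
      have hlap : ∀ x, lap G μ g x = -(if x = x₀ then 1 else 0) :=
        fun x => ((hGj j).2 x₀ (hA x₀)).1 x (hA x)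
      have hT1 : ∑ x : V, deg G μ x * lap G μ g x = -(deg G μ x₀) := by
        have : ∀ x : V, deg G μ x * lap G μ g x
            = (if x = x₀ then -(deg G μ x) else 0) := by
          intro x
          rw [hlap x]
          by_cases h : x = x₀ <;> simp [h]
        rw [Finset.sum_congr rfl (fun x _ => this x), Finset.sum_ite_eq' Finset.univ x₀
          (fun x => -(deg G μ x))]
        simp
      have hT2 : ∑ x : V, deg G μ x * lap G μ g x = 0 := by
        have hd : ∀ x : V, deg G μ x ≠ 0 := fun x => ne_of_gt (deg_pos hconn hpos x)
        have e1 : ∀ x : V, deg G μ x * lap G μ g x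
            = ∑ z : V, (if G.Adj x z then μ x z * (g z - g x) else 0) := by
          intro x
          rw [deg_mul_lap (hd x),
            show (G.neighborFinset x) = Finset.univ.filter (fun z => G.Adj x z) by
              ext z; simp [SimpleGraph.mem_neighborFinset],
            Finset.sum_filter]
        rw [Finset.sum_congr rfl (fun x _ => e1 x)]
        have hanti : ∑ x : V, ∑ z : V, (if G.Adj x z then μ x z * (g z - g x) else 0)
            = -∑ x : V, ∑ z : V, (if G.Adj x z then μ x z * (g z - g x) else 0) := by
          conv_lhs => rw [Finset.sum_comm]
          rw [← Finset.sum_neg_distrib]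
          apply Finset.sum_congr rfl
          intro x _
          rw [← Finset.sum_neg_distrib]
          apply Finset.sum_congr rfl
          intro z _
          by_cases h : G.Adj z x
          · simp only [h, if_true, h.symm, if_true]
            rw [hsymm z x]
            ring
          · have h' : ¬ G.Adj x z := fun hc => h hc.symm
            simp [h, h']
        linarith [hanti]
      rw [hT1] at hT2
      have := deg_pos (μ := μ) hconn hpos x₀
      linarith
  | inr hinf =>
    haveI := hinf
    have hbdd : ∀ y : V, ∃ M : ℝ, ∀ j, G.dist y x₀ < j → ∀ x, Gj j x y ≤ M :=
      fun y => green_bounded hconn hsymm hpos x₀ φ hφpos hφsuper hφvanish Gj hGj y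
    choose M hM using hbdd
    refine ⟨fun x y => ⨆ j : ℕ, Gj (j + (G.dist y x₀ + 1)) x y, ?_, ?_, ?_⟩
    all_goals {
      have htend : ∀ x y : V, Tendsto (fun j => Gj j x y) atTop
          (nhds (⨆ j : ℕ, Gj (j + (G.dist y x₀ + 1)) x y)) := by
        intro x y
        have hmono : Monotone (fun j => Gj (j + (G.dist y x₀ + 1)) x y) := by
          intro i k hik
          exact green_mono hconn hpos x₀ Gj hGj (by omega) (by omega) x
        have hbddr : BddAbove (Set.range (fun j => Gj (j + (G.dist y x₀ + 1)) x y)) := by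
          refine ⟨M y, ?_⟩
          rintro r ⟨j, rfl⟩
          exact hM y _ (by omega) x
        have h1 := tendsto_atTop_ciSup hmono hbddr
        exact (tendsto_add_atTop_iff_nat (G.dist y x₀ + 1)).mp h1
      first
      | exact fun x y _ => htend x y
      | exact fun x y => ge_of_tendsto' (htend x y) (fun j => (hGj j).1 x y)
      | { intro y x
          have hlapt : Tendsto (fun j => lap G μ (fun z => Gj j z y) x) atTop
              (nhds (lap G μ (fun z => ⨆ j : ℕ, Gj (j + (G.dist y x₀ + 1)) z y) x)) := by
            unfold lap
            apply tendsto_finset_sum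
            intro z _
            exact ((htend z y).sub (htend x y)).const_mul _
          have heq : ∀ᶠ j in atTop,
              lap G μ (fun z => Gj j z y) x = -(if x = y then 1 else 0) := by
            rw [eventually_atTop]
            refine ⟨max (G.dist x x₀) (G.dist y x₀) + 1, fun j hjge => ?_⟩
            exact ((hGj j).2 y (by omega)).1 x (by omega)
          have hlapt2 : Tendsto (fun j => lap G μ (fun z => Gj j z y) x) atTop
              (nhds (-(if x = y then 1 else 0))) :=
            Tendsto.congr' (EventuallyEq.symm heq) tendsto_const_nhds
          exact tendsto_nhds_unique hlapt hlapt2 }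
    }
end
end
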